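/- arXiv:2309.04123 — 2 statements merged into one kernel-verified Lean document; each statement's English description precedes it below -/
import Mathlib

section
/- Let (𝒜, φ) be a non-commutative probability space and, for each N ≥ 1, let a_1, …, a_N ∈ 𝒜 satisfy φ(a_i) = 0, φ(a_i²) = 1, have uniformly bounded moments of all orders (for each n ≥ 1, sup_{i,N} |φ(a_i^n)| < ∞), and be BMT independent with respect to the empty digraph on [N] (no edges). Then for every integer m ≥ 1, lim_{N→∞} φ(((a_1 + ⋯ + a_N)/√N)^m) equals 1 if m is even and 0 if m is odd; i.e., the normalized sums converge in moments to the symmetric Bernoulli distribution (δ_{−1} + δ_{+1})/2. -/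
open scoped Classical
open Filter

noncomputable section

/-- The relation defining the kernel of `f` restricted to the index set `S`,
subordinated to the digraph with edge relation `E`: `k ∼ k'` iff `f k = f k'` and
every `l ∈ S` strictly between `k` and `k'` with `f l ≠ f k` satisfies `(f l, f k) ∈ E`. -/
def kerGRelOn {m : ℕ} {V : Type*} (E : V → V → Prop) (f : Fin m → V)
    (S : Finset (Fin m)) (k k' : Fin m) : Prop :=
  f k = f k' ∧ ∀ l ∈ S, min k k' < l → l < max k k' → f l ≠ f k → E (f l) (f k)

/-- The blocks of the kernel of `f|_S` subordinated to the digraph `E`. -/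
def kerGBlocks {m : ℕ} {V : Type*} (E : V → V → Prop) (f : Fin m → V)
    (S : Finset (Fin m)) : Finset (Finset (Fin m)) :=
  S.image fun k => S.filter fun k' => kerGRelOn E f S k k'

/-- The blocks of the plain kernel `ker[f]` of `f : [m] → V`. -/
def kerBlocks {m : ℕ} {V : Type*} (f : Fin m → V) : Finset (Finset (Fin m)) :=
  Finset.univ.image fun k => Finset.univ.filter fun k' => f k = f k'

/-- The product of `a k` for `k ∈ B`, taken in increasing order of `k`. -/
def blockProd {A : Type*} [Monoid A] {m : ℕ} (a : Fin m → A) (B : Finset (Fin m)) : A :=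
  ((B.sort (· ≤ ·)).map a).prod

/-- The edge set of the nesting-crossing graph of the partition `π`, relabeled along `f`:
the pair `(f-label of B, f-label of C)` is an edge whenever `B ≠ C` are blocks of `π` and
some `l ∈ B` lies strictly between two elements (equivalently, between min and max) of `C`. -/
def nestCrossEdges {m : ℕ} {V : Type*} (π : Finset (Finset (Fin m))) (f : Fin m → V) :
    Set (V × V) :=
  { p | ∃ B ∈ π, ∃ C ∈ π, B ≠ C ∧
      (∃ l ∈ B, ∃ c₁ ∈ C, ∃ c₂ ∈ C, c₁ < l ∧ l < c₂) ∧
      (∃ k ∈ B, f k = p.1) ∧ (∃ k' ∈ C, f k' = p.2) }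

/-- A family of (non-unital) subalgebras of a non-commutative probability space `(𝒜, φ)`
is BMT independent with respect to the digraph `E` on the index set `I`. -/
def BMTIndep {𝒜 : Type*} [Ring 𝒜] [Algebra ℂ 𝒜] (φ : 𝒜 →ₗ[ℂ] ℂ)
    {I : Type*} (E : I → I → Prop) (A : I → NonUnitalSubalgebra ℂ 𝒜) : Prop :=
  ∀ (m : ℕ), 1 ≤ m → ∀ (idx : Fin m → I) (a : Fin m → 𝒜),
    (∀ k, a k ∈ A (idx k)) →
    φ (List.ofFn a).prod = ∏ B ∈ kerGBlocks E idx Finset.univ, φ (blockProd a B)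

/-- Random variables `a 0, …, a (N-1)` are BMT independent with respect to the digraph `E`. -/
def BMTIndepVars {𝒜 : Type*} [Ring 𝒜] [Algebra ℂ 𝒜] (φ : 𝒜 →ₗ[ℂ] ℂ)
    {N : ℕ} (E : Fin N → Fin N → Prop) (a : Fin N → 𝒜) : Prop :=
  ∀ (m : ℕ) (idx : Fin m → Fin N),
    φ (List.ofFn fun k => a (idx k)).prod
      = ∏ B ∈ kerGBlocks E idx Finset.univ, φ (blockProd (fun k => a (idx k)) B)


namespace Stmt14

variable {m : ℕ} {V : Type*}

/-- `k` and `k'` see only their own value between them. -/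
def runRel (w : Fin m → V) (k k' : Fin m) : Prop :=
  ∀ l, min k k' ≤ l → l ≤ max k k' → w l = w k

lemma fin_val_min (k k' : Fin m) : ((min k k' : Fin m) : ℕ) = min (k : ℕ) (k' : ℕ) := by
  rw [min_def, min_def]
  split_ifs with h h2 h3 <;> first | rfl | (exfalso; rw [Fin.le_def] at *; omega)

lemma fin_val_max (k k' : Fin m) : ((max k k' : Fin m) : ℕ) = max (k : ℕ) (k' : ℕ) := by
  rw [max_def, max_def]
  split_ifs with h h2 h3 <;> first | rfl | (exfalso; rw [Fin.le_def] at *; omega)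

lemma runRel_iff {w : Fin m → V} {k k' : Fin m} :
    runRel w k k' ↔ ∀ l : Fin m, min (k:ℕ) (k':ℕ) ≤ (l:ℕ) → (l:ℕ) ≤ max (k:ℕ) (k':ℕ) →
      w l = w k := by
  unfold runRel
  constructor
  · intro h l h1 h2
    exact h l (by rw [Fin.le_def, fin_val_min]; exact h1)
      (by rw [Fin.le_def, fin_val_max]; exact h2)
  · intro h l h1 h2
    exact h l (by rw [Fin.le_def, fin_val_min] at h1; exact h1)
      (by rw [Fin.le_def, fin_val_max] at h2; exact h2)

lemma runRel_refl (w : Fin m → V) (k : Fin m) : runRel w k k := by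
  rw [runRel_iff]
  intro l h1 h2
  have : l = k := Fin.ext (by omega)
  rw [this]

lemma runRel.eq {w : Fin m → V} {k k' : Fin m} (h : runRel w k k') : w k' = w k := by
  rw [runRel_iff] at h
  exact h k' (by omega) (by omega)

lemma runRel.symm {w : Fin m → V} {k k' : Fin m} (h : runRel w k k') : runRel w k' k := by
  have he := h.eq
  rw [runRel_iff] at h ⊢
  intro l h1 h2
  rw [h l (by omega) (by omega), he]

/-- anything between two `runRel`-partners of `s` is a `runRel`-partner of `s`. -/
lemma runRel_union {w : Fin m → V} {s k k' l : Fin m} (hk : runRel w s k) (hk' : runRel w s k')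
    (h1 : min (k:ℕ) (k':ℕ) ≤ (l:ℕ)) (h2 : (l:ℕ) ≤ max (k:ℕ) (k':ℕ)) : runRel w s l := by
  rw [runRel_iff] at hk hk' ⊢
  intro t ht1 ht2
  rcases (by omega : (min (s:ℕ) (k:ℕ) ≤ (t:ℕ) ∧ (t:ℕ) ≤ max (s:ℕ) (k:ℕ)) ∨
      (min (s:ℕ) (k':ℕ) ≤ (t:ℕ) ∧ (t:ℕ) ≤ max (s:ℕ) (k':ℕ))) with ⟨u1, u2⟩ | ⟨u1, u2⟩
  · exact hk t u1 u2
  · exact hk' t u1 u2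

lemma runRel.trans {w : Fin m → V} {k k' k'' : Fin m} (h : runRel w k k')
    (h' : runRel w k' k'') : runRel w k k'' := by
  have h1 : runRel w k' k := h.symm
  have h2 : runRel w k' k'' := h'
  rw [runRel_iff]
  intro l hl1 hl2
  have hl : runRel w k' l := runRel_union h1 h2 (by omega) (by omega)
  rw [hl.eq, h.eq]

lemma runRel_adj {w : Fin m → V} {j l : Fin m} (h : (j:ℕ) + 1 = (l:ℕ)) (he : w j = w l) :
    runRel w j l := by
  rw [runRel_iff]
  intro t h1 h2
  rcases (by omega : t = (j:ℕ) ∨ t = (l:ℕ)) with ht | ht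
  · have : t = j := Fin.ext ht
    rw [this]
  · have : t = l := Fin.ext ht
    rw [this, ← he]

/-- The `runRel`-class of `k`. -/
def cls (w : Fin m → V) (k : Fin m) : Finset (Fin m) :=
  Finset.univ.filter (runRel w k)

lemma mem_cls {w : Fin m → V} {k k' : Fin m} : k' ∈ cls w k ↔ runRel w k k' := by
  simp [cls]

lemma self_mem_cls {w : Fin m → V} {k : Fin m} : k ∈ cls w k := mem_cls.2 (runRel_refl w k)

lemma cls_eq_of_runRel {w : Fin m → V} {k k' : Fin m} (h : runRel w k k') :
    cls w k = cls w k' := by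
  ext x
  simp only [mem_cls]
  exact ⟨fun hx => h.symm.trans hx, fun hx => h.trans hx⟩

/-- `k` starts a run. -/
def IsStart (w : Fin m → V) (k : Fin m) : Prop :=
  ∀ j : Fin m, (j : ℕ) + 1 = (k : ℕ) → w j ≠ w k

def starts (w : Fin m → V) : Finset (Fin m) :=
  Finset.univ.filter (IsStart w)

lemma mem_starts {w : Fin m → V} {k : Fin m} : k ∈ starts w ↔ IsStart w k := by
  simp [starts]

lemma start_le_of_mem_cls {w : Fin m → V} {s k : Fin m} (hs : s ∈ starts w)
    (hk : k ∈ cls w s) : s ≤ k := by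
  by_contra hlt
  push_neg at hlt
  have hks : (k:ℕ) < (s:ℕ) := hlt
  have hs1 : 1 ≤ (s:ℕ) := by omega
  set j : Fin m := ⟨(s:ℕ) - 1, by omega⟩ with hj
  have hjv : (j:ℕ) = (s:ℕ) - 1 := rfl
  have hr : runRel w s k := mem_cls.1 hk
  rw [runRel_iff] at hr
  have : w j = w s := hr j (by omega) (by omega)
  exact mem_starts.1 hs j (by omega) this

lemma not_start_exists {w : Fin m → V} {k : Fin m} (h : k ∉ starts w) :
    ∃ j : Fin m, (j:ℕ) + 1 = (k:ℕ) ∧ w j = w k := by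
  rw [mem_starts, IsStart] at h
  push_neg at h
  exact h

end Stmt14
namespace Stmt14

variable {m : ℕ} {V : Type*}

/-- The start of the run containing `k`. -/
def toStart (w : Fin m → V) (k : Fin m) : Fin m :=
  (cls w k).min' ⟨k, self_mem_cls⟩

lemma toStart_runRel (w : Fin m → V) (k : Fin m) : runRel w k (toStart w k) :=
  mem_cls.1 ((cls w k).min'_mem ⟨k, self_mem_cls⟩)

lemma toStart_mem_starts (w : Fin m → V) (k : Fin m) : toStart w k ∈ starts w := by
  by_contra h
  obtain ⟨j, hj1, hj2⟩ := not_start_exists h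
  have h1 : runRel w (toStart w k) j := (runRel_adj hj1 hj2).symm
  have h2 : runRel w k j := (toStart_runRel w k).trans h1
  have hjm : j ∈ cls w k := mem_cls.2 h2
  have hle : toStart w k ≤ j := (cls w k).min'_le j hjm
  rw [Fin.le_def] at hle
  omega

lemma cls_toStart (w : Fin m → V) (k : Fin m) : cls w (toStart w k) = cls w k :=
  (cls_eq_of_runRel (toStart_runRel w k)).symm

lemma starts_injOn {w : Fin m → V} {s s' : Fin m} (hs : s ∈ starts w) (hs' : s' ∈ starts w)
    (h : runRel w s s') : s = s' := by
  have h1 : s' ∈ cls w s := mem_cls.2 h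
  have h2 : s ∈ cls w s' := mem_cls.2 h.symm
  exact le_antisymm (start_le_of_mem_cls hs h1) (start_le_of_mem_cls hs' h2)

lemma toStart_start {w : Fin m → V} {s : Fin m} (hs : s ∈ starts w) : toStart w s = s :=
  starts_injOn (toStart_mem_starts w s) hs (toStart_runRel w s).symm

lemma toStart_eq_iff {w : Fin m → V} {s k : Fin m} (hs : s ∈ starts w) :
    toStart w k = s ↔ k ∈ cls w s := by
  constructor
  · intro h
    have hh := cls_toStart w k
    rw [h] at hh
    rw [hh]
    exact self_mem_cls
  · intro h
    exact starts_injOn (toStart_mem_starts w k) hs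
      ((mem_cls.1 h).trans (toStart_runRel w k)).symm

lemma cls_injOn_starts {w : Fin m → V} {s s' : Fin m} (hs : s ∈ starts w)
    (hs' : s' ∈ starts w) (h : cls w s = cls w s') : s = s' := by
  apply starts_injOn hs hs'
  have : s' ∈ cls w s := by rw [h]; exact self_mem_cls
  exact mem_cls.1 this

lemma sum_cls_card (w : Fin m → V) : ∑ s ∈ starts w, (cls w s).card = m := by
  have h := Finset.card_eq_sum_card_fiberwise
    (f := toStart w) (s := Finset.univ) (t := starts w)
    (fun x _ => toStart_mem_starts w x)
  rw [Finset.card_univ, Fintype.card_fin] at h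
  have h2 : ∑ s ∈ starts w, (cls w s).card
      = ∑ b ∈ starts w, (Finset.filter (fun a => toStart w a = b) Finset.univ).card := by
    apply Finset.sum_congr rfl
    intro s hs
    congr 1
    ext k
    simp only [Finset.mem_filter, Finset.mem_univ, true_and]
    exact (toStart_eq_iff hs).symm
  rw [h2]
  exact h.symm

lemma starts_nonempty (hm : 0 < m) (w : Fin m → V) : (starts w).Nonempty := by
  refine ⟨⟨0, hm⟩, mem_starts.2 ?_⟩
  intro j hj
  simp at hj

lemma zero_mem_starts (hm : 0 < m) (w : Fin m → V) : (⟨0, hm⟩ : Fin m) ∈ starts w := by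
  refine mem_starts.2 ?_
  intro j hj
  simp at hj

lemma kerGRelOn_iff {E : V → V → Prop} (hE : ∀ v v', ¬ E v v') (w : Fin m → V)
    (k k' : Fin m) : kerGRelOn E w Finset.univ k k' ↔ runRel w k k' := by
  constructor
  · intro ⟨h1, h2⟩
    intro l hl1 hl2
    by_cases he : w l = w k
    · exact he
    · rcases lt_or_eq_of_le hl1 with hlt1 | heq1
      · rcases lt_or_eq_of_le hl2 with hlt2 | heq2
        · exact absurd (h2 l (Finset.mem_univ l) hlt1 hlt2 he) (hE _ _)
        · rcases max_choice k k' with hc | hc <;> rw [heq2, hc] <;> exact h1.symm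
      · rcases min_choice k k' with hc | hc <;> rw [← heq1, hc] <;> exact h1.symm
  · intro h
    refine ⟨h.eq.symm, fun l _ hl1 hl2 he => absurd (h l (le_of_lt hl1) (le_of_lt hl2)) he⟩

lemma kerGBlocks_eq {E : V → V → Prop} (hE : ∀ v v', ¬ E v v') (w : Fin m → V) :
    kerGBlocks E w Finset.univ = (starts w).image (cls w) := by
  unfold kerGBlocks
  have hflt : ∀ k, (Finset.univ.filter fun k' => kerGRelOn E w Finset.univ k k') = cls w k := by
    intro k
    unfold cls
    apply Finset.filter_congr
    intro x _
    exact kerGRelOn_iff hE w k x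
  apply Finset.Subset.antisymm
  · intro B hB
    obtain ⟨k, _, hk⟩ := Finset.mem_image.1 hB
    rw [hflt k] at hk
    exact Finset.mem_image.2 ⟨toStart w k, toStart_mem_starts w k, by rw [cls_toStart w k, hk]⟩
  · intro B hB
    obtain ⟨s, _, hk⟩ := Finset.mem_image.1 hB
    exact Finset.mem_image.2 ⟨s, Finset.mem_univ s, by rw [hflt s, hk]⟩

lemma blockProd_const {A : Type*} [Monoid A] {b : Fin m → A} {B : Finset (Fin m)} {c : A}
    (h : ∀ x ∈ B, b x = c) : blockProd b B = c ^ B.card := by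
  unfold blockProd
  rw [← Finset.length_sort (α := Fin m) (· ≤ ·) (s := B), ← List.length_map b]
  apply List.prod_eq_pow_card
  intro x hx
  obtain ⟨y, hy, rfl⟩ := List.mem_map.1 hx
  exact h y ((Finset.mem_sort _).1 hy)

end Stmt14
namespace Stmt14

variable {m : ℕ} {V : Type*}

/-- Main word formula: the moment of a word under BMT independence w.r.t. an empty graph. -/
lemma word_formula {𝒜 : Type*} [Ring 𝒜] [Algebra ℂ 𝒜] (φ : 𝒜 →ₗ[ℂ] ℂ)
    {N : ℕ} {E : Fin N → Fin N → Prop} {b : Fin N → 𝒜}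
    (hE : ∀ v v', ¬ E v v') (hind : BMTIndepVars φ E b) (idx : Fin m → Fin N) :
    φ (List.ofFn fun k => b (idx k)).prod
      = ∏ s ∈ starts idx, φ (b (idx s) ^ (cls idx s).card) := by
  rw [hind m idx, kerGBlocks_eq hE idx,
    Finset.prod_image (fun s hs s' hs' h => cls_injOn_starts hs hs' h)]
  apply Finset.prod_congr rfl
  intro s _
  congr 1
  exact blockProd_const (fun x hx => by rw [(mem_cls.1 hx).eq])

/-- The last start `≤ k`, as a function of a candidate start set. -/
def prevOf (S : Finset (Fin m)) (k : Fin m) : Fin m :=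
  if h : (S.filter (· ≤ k)).Nonempty then (S.filter (· ≤ k)).max' h else k

lemma prevOf_eq_self {S : Finset (Fin m)} {k : Fin m} (hk : k ∈ S) : prevOf S k = k := by
  have hne : (S.filter (· ≤ k)).Nonempty := ⟨k, Finset.mem_filter.2 ⟨hk, le_refl k⟩⟩
  rw [prevOf, dif_pos hne]
  apply le_antisymm
  · apply Finset.max'_le
    intro y hy
    exact (Finset.mem_filter.1 hy).2
  · have hkmem : k ∈ S.filter (· ≤ k) := Finset.mem_filter.2 ⟨hk, le_refl k⟩
    exact Finset.le_max' _ k hkmem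

lemma prevOf_mem {S : Finset (Fin m)} {k : Fin m}
    (hne : (S.filter (· ≤ k)).Nonempty) : prevOf S k ∈ S := by
  rw [prevOf, dif_pos hne]
  exact (Finset.mem_filter.1 ((S.filter (· ≤ k)).max'_mem hne)).1

lemma reconstruct_aux (hm : 0 < m) (w : Fin m → V) :
    ∀ n : ℕ, ∀ k : Fin m, (k : ℕ) ≤ n → w (prevOf (starts w) k) = w k := by
  intro n
  induction n with
  | zero =>
    intro k hk
    have : k = ⟨0, hm⟩ := Fin.ext (show (k:ℕ) = 0 by omega)
    rw [this, prevOf_eq_self (zero_mem_starts hm w)]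
  | succ n ih =>
    intro k hk
    by_cases hks : k ∈ starts w
    · rw [prevOf_eq_self hks]
    · have hk0 : (k : ℕ) ≠ 0 := by
        intro h0
        have hk00 : k = ⟨0, hm⟩ := Fin.ext (show (k:ℕ) = ((⟨0, hm⟩ : Fin m) : ℕ) from h0)
        rw [hk00] at hks
        exact hks (zero_mem_starts hm w)
      obtain ⟨j, hj1, hj2⟩ := not_start_exists hks
      have hfeq : (starts w).filter (· ≤ k) = (starts w).filter (· ≤ j) := by
        ext s
        simp only [Finset.mem_filter, and_congr_right_iff]
        intro hs
        rw [Fin.le_def, Fin.le_def]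
        constructor
        · intro h
          have : s ≠ k := fun he => hks (he ▸ hs)
          have : (s:ℕ) ≠ (k:ℕ) := fun he => this (Fin.ext he)
          omega
        · intro h; omega
      have hne : ((starts w).filter (· ≤ k)).Nonempty :=
        ⟨⟨0, hm⟩, Finset.mem_filter.2 ⟨zero_mem_starts hm w, by rw [Fin.le_def]; exact Nat.zero_le _⟩⟩
      have hne' : ((starts w).filter (· ≤ j)).Nonempty := by rwa [hfeq] at hne
      have h1 : prevOf (starts w) k = prevOf (starts w) j := by
        unfold prevOf
        rw [hfeq, dif_pos hne', dif_pos hne']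
      rw [h1, ih j (by omega), hj2]

lemma reconstruct (hm : 0 < m) (w : Fin m → V) (k : Fin m) :
    w (prevOf (starts w) k) = w k :=
  reconstruct_aux hm w (k : ℕ) k (le_refl _)

lemma prevOf_mem_starts (hm : 0 < m) (w : Fin m → V) (k : Fin m) :
    prevOf (starts w) k ∈ starts w :=
  prevOf_mem ⟨⟨0, hm⟩, Finset.mem_filter.2 ⟨zero_mem_starts hm w, by rw [Fin.le_def]; exact Nat.zero_le _⟩⟩

/-- Two words with the same starts agreeing on the starts are equal. -/
lemma eq_of_starts_eq {N : ℕ} (hm : 0 < m) {w w' : Fin m → Fin N}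
    (h : starts w = starts w') (h2 : ∀ s ∈ starts w, w s = w' s) : w = w' := by
  funext k
  rw [← reconstruct hm w k, ← reconstruct hm w' k, ← h]
  exact h2 _ (prevOf_mem_starts hm w k)

/-- Fiber bound: words with a given start set. -/
lemma card_fiber_le (hm : 0 < m) (N : ℕ) (S : Finset (Fin m)) :
    ((Finset.univ : Finset (Fin m → Fin N)).filter (fun w => starts w = S)).card
      ≤ N ^ S.card := by
  have hcard : N ^ S.card
      = (Finset.univ : Finset ((x : {x : Fin m // x ∈ S}) → Fin N)).card := by
    rw [Finset.card_univ, Fintype.card_fun, Fintype.card_fin, Fintype.card_coe]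
  rw [hcard]
  apply Finset.card_le_card_of_injOn (fun w => fun x => w x.1)
  · intro w _
    exact Finset.mem_univ _
  · intro w1 hw1 w2 hw2 heq
    simp only [Finset.coe_filter, Set.mem_setOf_eq] at hw1 hw2
    apply eq_of_starts_eq hm (hw1.2.trans hw2.2.symm)
    intro s hs
    have : s ∈ S := hw1.2 ▸ hs
    exact congrFun heq ⟨s, this⟩

/-- Count of words with few runs. -/
lemma card_badset_le (hm : 0 < m) (N : ℕ) (hN : 1 ≤ N) (r : ℕ) :
    ((Finset.univ : Finset (Fin m → Fin N)).filter (fun w => (starts w).card ≤ r)).card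
      ≤ 2 ^ m * N ^ r := by
  set B := (Finset.univ : Finset (Fin m → Fin N)).filter (fun w => (starts w).card ≤ r) with hB
  have hmap : ∀ w ∈ B, starts w ∈ (Finset.univ : Finset (Finset (Fin m))).filter
      (fun S => S.card ≤ r) := by
    intro w hw
    simp only [hB, Finset.mem_filter, Finset.mem_univ, true_and] at hw ⊢
    exact hw
  have h1 := Finset.card_eq_sum_card_fiberwise hmap
  rw [h1]
  calc ∑ S ∈ (Finset.univ : Finset (Finset (Fin m))).filter (fun S => S.card ≤ r),
        (B.filter (fun w => starts w = S)).card
      ≤ ∑ S ∈ (Finset.univ : Finset (Finset (Fin m))).filter (fun S => S.card ≤ r), N ^ r := by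
        apply Finset.sum_le_sum
        intro S hS
        simp only [Finset.mem_filter, Finset.mem_univ, true_and] at hS
        calc (B.filter (fun w => starts w = S)).card
            ≤ ((Finset.univ : Finset (Fin m → Fin N)).filter (fun w => starts w = S)).card := by
              apply Finset.card_le_card
              intro w hw
              simp only [hB, Finset.mem_filter, Finset.mem_univ, true_and] at hw ⊢
              exact hw.2
          _ ≤ N ^ S.card := card_fiber_le hm N S
          _ ≤ N ^ r := Nat.pow_le_pow_right hN hS
    _ ≤ 2 ^ m * N ^ r := by
        rw [Finset.sum_const, smul_eq_mul]
        apply Nat.mul_le_mul_right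
        calc ((Finset.univ : Finset (Finset (Fin m))).filter (fun S => S.card ≤ r)).card
            ≤ (Finset.univ : Finset (Finset (Fin m))).card := Finset.card_filter_le _ _
          _ = 2 ^ m := by rw [Finset.card_univ, Fintype.card_finset, Fintype.card_fin]

end Stmt14
namespace Stmt14

variable {m : ℕ} {V : Type*}

/-- Every block of the kernel partition is a pair. -/
def AllTwo (w : Fin m → V) : Prop := ∀ s ∈ starts w, (cls w s).card = 2

def P1 (w : Fin m → V) : Prop :=
  ∀ j : Fin m, (j:ℕ) % 2 = 0 → ∀ h : (j:ℕ) + 1 < m, w ⟨(j:ℕ)+1, h⟩ = w j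

def P2 (w : Fin m → V) : Prop :=
  ∀ j : Fin m, (j:ℕ) % 2 = 1 → ∀ h : (j:ℕ) + 1 < m, w ⟨(j:ℕ)+1, h⟩ ≠ w j

lemma allTwo_of_pattern (hmev : m % 2 = 0) {w : Fin m → V} (hP1 : P1 w) (hP2 : P2 w) :
    AllTwo w := by
  intro s hs
  have hsev : (s:ℕ) % 2 = 0 := by
    by_contra hodd
    have hodd' : (s:ℕ) % 2 = 1 := by omega
    have hs1 : 1 ≤ (s:ℕ) := by omega
    set j : Fin m := ⟨(s:ℕ) - 1, by omega⟩ with hj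
    have hjv : (j:ℕ) = (s:ℕ) - 1 := rfl
    have := hP1 j (by omega) (by omega)
    have hjs : (⟨(j:ℕ)+1, by omega⟩ : Fin m) = s := Fin.ext (show (j:ℕ)+1 = (s:ℕ) by omega)
    rw [hjs] at this
    exact mem_starts.1 hs j (by omega) this.symm
  have h1 : (s:ℕ) + 1 < m := by
    have := s.isLt; omega
  set s1 : Fin m := ⟨(s:ℕ)+1, h1⟩ with hs1def
  have hs1v : (s1:ℕ) = (s:ℕ) + 1 := rfl
  have hw1 : w s1 = w s := hP1 s hsev h1
  have hmem1 : s1 ∈ cls w s := mem_cls.2 (runRel_adj rfl hw1.symm)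
  have hsub : ∀ k ∈ cls w s, k = s ∨ k = s1 := by
    intro k hk
    have h2 : (s:ℕ) ≤ (k:ℕ) := start_le_of_mem_cls hs hk
    by_contra hcon
    push_neg at hcon
    have hk2 : (s:ℕ) + 2 ≤ (k:ℕ) := by
      rcases Nat.lt_or_ge (k:ℕ) ((s:ℕ)+2) with h | h
      · exfalso
        rcases (by omega : (k:ℕ) = (s:ℕ) ∨ (k:ℕ) = (s:ℕ)+1) with he | he
        · exact hcon.1 (Fin.ext he)
        · exact hcon.2 (Fin.ext he)
      · exact h
    have h3 : (s:ℕ) + 2 < m := by have := k.isLt; omega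
    set s2 : Fin m := ⟨(s:ℕ)+2, h3⟩ with hs2def
    have hs2v : (s2:ℕ) = (s:ℕ) + 2 := rfl
    have hr : runRel w s s2 :=
      runRel_union (runRel_refl w s) (mem_cls.1 hk) (by omega) (by omega)
    have hw2 : w s2 = w s := hr.eq
    have := hP2 s1 (by omega) (by omega : (s1:ℕ)+1 < m)
    have hcast : (⟨(s1:ℕ)+1, by omega⟩ : Fin m) = s2 := Fin.ext (show (s1:ℕ)+1 = (s2:ℕ) by omega)
    rw [hcast] at this
    exact this (by rw [hw2, hw1])
  have hset : cls w s = {s, s1} := by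
    ext k
    simp only [Finset.mem_insert, Finset.mem_singleton]
    constructor
    · exact hsub k
    · rintro (rfl | rfl)
      · exact self_mem_cls
      · exact hmem1
  rw [hset]
  exact Finset.card_pair (fun h => by
    have : (s:ℕ) = (s:ℕ) + 1 := congrArg Fin.val h
    omega)

lemma allTwo_even {w : Fin m → V} (hA : AllTwo w) : m = 2 * (starts w).card := by
  have h := sum_cls_card w
  rw [Finset.sum_congr rfl (fun s hs => hA s hs)] at h
  rw [Finset.sum_const, smul_eq_mul] at h
  omega

lemma allTwo_cls_structure {w : Fin m → V} (hA : AllTwo w) {s : Fin m} (hs : s ∈ starts w) :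
    ∃ h : (s:ℕ) + 1 < m, cls w s = {s, ⟨(s:ℕ)+1, h⟩} := by
  obtain ⟨x, y, hxy, hset⟩ := Finset.card_eq_two.1 (hA s hs)
  have hself : s ∈ ({x, y} : Finset (Fin m)) := hset ▸ self_mem_cls
  simp only [Finset.mem_insert, Finset.mem_singleton] at hself
  -- let t be the other element
  obtain ⟨t, htne, hts⟩ : ∃ t, t ≠ s ∧ ({x, y} : Finset (Fin m)) = {s, t} := by
    rcases hself with rfl | rfl
    · exact ⟨y, fun h => hxy h.symm, rfl⟩
    · exact ⟨x, hxy, Finset.pair_comm x s⟩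
  have htmem : t ∈ cls w s := by rw [hset, hts]; simp
  have hle : (s:ℕ) ≤ (t:ℕ) := start_le_of_mem_cls hs htmem
  have hlt : (s:ℕ) < (t:ℕ) := by
    rcases Nat.lt_or_ge (s:ℕ) (t:ℕ) with h | h
    · exact h
    · exact absurd (Fin.ext (by omega : (t:ℕ) = (s:ℕ))) htne
  have h1 : (s:ℕ) + 1 < m := by have := t.isLt; omega
  have htv : (t:ℕ) = (s:ℕ) + 1 := by
    by_contra hne
    have h2 : (s:ℕ) + 2 ≤ (t:ℕ) := by omega
    set s1 : Fin m := ⟨(s:ℕ)+1, h1⟩ with hs1def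
    have hs1v : (s1:ℕ) = (s:ℕ) + 1 := rfl
    have hmem : s1 ∈ cls w s :=
      mem_cls.2 (runRel_union (runRel_refl w s) (mem_cls.1 htmem)
        (by omega) (by omega))
    rw [hset, hts] at hmem
    simp only [Finset.mem_insert, Finset.mem_singleton] at hmem
    rcases hmem with h | h
    · have : (s:ℕ) + 1 = (s:ℕ) := congrArg Fin.val h
      omega
    · have : (s:ℕ) + 1 = (t:ℕ) := congrArg Fin.val h
      omega
  refine ⟨h1, ?_⟩
  have htt : t = ⟨(s:ℕ)+1, h1⟩ := Fin.ext htv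
  rw [hset, hts, htt]

lemma allTwo_next_start {w : Fin m → V} (hA : AllTwo w) {s : Fin m} (hs : s ∈ starts w)
    (h2 : (s:ℕ) + 2 < m) :
    (⟨(s:ℕ)+2, h2⟩ : Fin m) ∈ starts w ∧
      w ⟨(s:ℕ)+2, h2⟩ ≠ w ⟨(s:ℕ)+1, by omega⟩ := by
  obtain ⟨h1, hset⟩ := allTwo_cls_structure hA hs
  set s1 : Fin m := ⟨(s:ℕ)+1, h1⟩ with hs1def
  set s2 : Fin m := ⟨(s:ℕ)+2, h2⟩ with hs2def
  have hs1v : (s1:ℕ) = (s:ℕ) + 1 := rfl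
  have hs2v : (s2:ℕ) = (s:ℕ) + 2 := rfl
  have hne : w s2 ≠ w s1 := by
    intro he
    have hadj : runRel w s1 s2 := runRel_adj rfl he.symm
    have hmem1 : s1 ∈ cls w s := by rw [hset]; simp
    have : s2 ∈ cls w s := mem_cls.2 ((mem_cls.1 hmem1).trans hadj)
    rw [hset] at this
    simp only [Finset.mem_insert, Finset.mem_singleton] at this
    rcases this with h | h
    · have : (s:ℕ) + 2 = (s:ℕ) := congrArg Fin.val h
      omega
    · have : (s:ℕ) + 2 = (s:ℕ) + 1 := congrArg Fin.val h
      omega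
  refine ⟨mem_starts.2 ?_, hne⟩
  intro j hj
  have : j = s1 := Fin.ext (by omega)
  rw [this]
  exact fun h => hne h.symm

lemma allTwo_even_starts {w : Fin m → V} (hm : 0 < m) (hA : AllTwo w) :
    ∀ t : Fin m, (t:ℕ) % 2 = 0 → t ∈ starts w := by
  suffices h : ∀ n : ℕ, ∀ t : Fin m, (t:ℕ) ≤ n → (t:ℕ) % 2 = 0 → t ∈ starts w by
    intro t ht
    exact h (t:ℕ) t (le_refl _) ht
  intro n
  induction n with
  | zero =>
    intro t htn _
    have : t = ⟨0, hm⟩ := Fin.ext (show (t:ℕ) = 0 by omega)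
    rw [this]; exact zero_mem_starts hm w
  | succ n ih =>
    intro t htn htev
    by_cases h0 : (t:ℕ) = 0
    · have : t = ⟨0, hm⟩ := Fin.ext h0
      rw [this]; exact zero_mem_starts hm w
    · have h2 : 2 ≤ (t:ℕ) := by omega
      set t' : Fin m := ⟨(t:ℕ) - 2, by have := t.isLt; omega⟩ with ht'def
      have ht'v : (t':ℕ) = (t:ℕ) - 2 := rfl
      have ht' : t' ∈ starts w := ih t' (by omega) (by omega)
      have hlt : (t':ℕ) + 2 < m := by have := t.isLt; omega
      have := (allTwo_next_start hA ht' hlt).1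
      have hcast : (⟨(t':ℕ)+2, hlt⟩ : Fin m) = t := Fin.ext (show (t':ℕ)+2 = (t:ℕ) by omega)
      rwa [hcast] at this

lemma pattern_of_allTwo {w : Fin m → V} (hm : 0 < m) (hA : AllTwo w) : P1 w ∧ P2 w := by
  constructor
  · intro j hj hlt
    have hjs : j ∈ starts w := allTwo_even_starts hm hA j hj
    obtain ⟨h1, hset⟩ := allTwo_cls_structure hA hjs
    have hmem : (⟨(j:ℕ)+1, hlt⟩ : Fin m) ∈ cls w j := by rw [hset]; simp
    exact (mem_cls.1 hmem).eq
  · intro j hj hlt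
    set t : Fin m := ⟨(j:ℕ) - 1, by have := j.isLt; omega⟩ with htdef
    have htv : (t:ℕ) = (j:ℕ) - 1 := rfl
    have ht : t ∈ starts w := allTwo_even_starts hm hA t (by omega)
    have h2 : (t:ℕ) + 2 < m := by omega
    have := (allTwo_next_start hA ht h2).2
    have hc1 : (⟨(t:ℕ)+2, h2⟩ : Fin m) = ⟨(j:ℕ)+1, hlt⟩ := Fin.ext (show (t:ℕ)+2 = (j:ℕ)+1 by omega)
    have hc2 : (⟨(t:ℕ)+1, by omega⟩ : Fin m) = j := Fin.ext (show (t:ℕ)+1 = (j:ℕ) by omega)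
    rwa [hc1, hc2] at this

end Stmt14
namespace Stmt14

variable {m : ℕ}

lemma P1_code {k N : ℕ} (hm : m = 2 * k) {w : Fin m → Fin N} (hw : P1 w) (l : Fin m) :
    w l = w ⟨2 * ((l:ℕ)/2), by have := l.isLt; omega⟩ := by
  by_cases hev : (l:ℕ) % 2 = 0
  · congr 1
    exact Fin.ext (show (l:ℕ) = 2*((l:ℕ)/2) by omega)
  · have h1 : 1 ≤ (l:ℕ) := by omega
    set j : Fin m := ⟨(l:ℕ) - 1, by have := l.isLt; omega⟩ with hjdef
    have hjv : (j:ℕ) = (l:ℕ) - 1 := rfl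
    have := hw j (by omega) (by have := l.isLt; omega)
    have hc1 : (⟨(j:ℕ)+1, by have := l.isLt; omega⟩ : Fin m) = l :=
      Fin.ext (show (j:ℕ)+1 = (l:ℕ) by omega)
    rw [hc1] at this
    rw [this]
    congr 1
    exact Fin.ext (show (j:ℕ) = 2*((l:ℕ)/2) by omega)

lemma P1_odd {k N : ℕ} (hm : m = 2 * k) {w : Fin m → Fin N} (hw : P1 w) {n : ℕ}
    (h : 2*n+1 < m) : w ⟨2*n+1, h⟩ = w ⟨2*n, by omega⟩ := by
  have h2 := P1_code hm hw ⟨2*n+1, h⟩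
  rw [h2]
  congr 1
  exact Fin.ext (show 2*((2*n+1)/2) = 2*n by omega)

lemma card_Q {k : ℕ} (N : ℕ) (hm : m = 2 * k) :
    ((Finset.univ : Finset (Fin m → Fin N)).filter (fun w => P1 w)).card = N ^ k := by
  have h := Finset.card_bij'
    (s := (Finset.univ : Finset (Fin m → Fin N)).filter (fun w => P1 w))
    (t := (Finset.univ : Finset (Fin k → Fin N)))
    (fun w _ => fun j => w ⟨2 * (j:ℕ), by have := j.isLt; omega⟩)
    (fun v _ => fun l => v ⟨(l:ℕ)/2, by have := l.isLt; omega⟩)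
    (fun w hw => Finset.mem_univ _)
    ?_ ?_ ?_
  · rw [h, Finset.card_univ, Fintype.card_fun, Fintype.card_fin, Fintype.card_fin]
  · -- inverse lands in Q
    intro v _
    simp only [Finset.mem_filter, Finset.mem_univ, true_and]
    intro j hj hlt
    show v ⟨((j:ℕ)+1)/2, by have := j.isLt; omega⟩ = v ⟨(j:ℕ)/2, by have := j.isLt; omega⟩
    congr 1
    exact Fin.ext (show ((j:ℕ)+1)/2 = (j:ℕ)/2 by omega)
  · -- left inverse
    intro w hw
    simp only [Finset.mem_filter, Finset.mem_univ, true_and] at hw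
    funext l
    show w ⟨2 * ((l:ℕ)/2), by have := l.isLt; omega⟩ = w l
    exact (P1_code hm hw l).symm
  · -- right inverse
    intro v _
    funext j
    show v ⟨(2*(j:ℕ))/2, by have := j.isLt; omega⟩ = v j
    congr 1
    exact Fin.ext (show (2*(j:ℕ))/2 = (j:ℕ) by omega)

lemma card_PP_le {k : ℕ} (N : ℕ) (hm : m = 2 * k) :
    ((Finset.univ : Finset (Fin m → Fin N)).filter (fun w => P1 w ∧ P2 w)).card ≤ N ^ k := by
  rw [← card_Q N hm]
  apply Finset.card_le_card
  intro w hw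
  simp only [Finset.mem_filter, Finset.mem_univ, true_and] at hw ⊢
  exact hw.1

/-- bad adjacency at pair `i` -/
def Cbad {N : ℕ} (k : ℕ) (i : Fin k) (w : Fin m → Fin N) : Prop :=
  ∃ h : 2*(i:ℕ)+2 < m, w ⟨2*(i:ℕ)+2, h⟩ = w ⟨2*(i:ℕ)+1, by omega⟩

lemma card_Cbad_le {k N : ℕ} (hm : m = 2 * k) (i : Fin k) :
    (((Finset.univ : Finset (Fin m → Fin N)).filter (fun w => P1 w)).filter
      (Cbad k i)).card ≤ N ^ (k-1) := by
  classical
  by_cases hik : (i:ℕ)+1 < k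
  · set ci : Fin k := ⟨(i:ℕ)+1, hik⟩ with hcidef
    have hciv : (ci:ℕ) = (i:ℕ)+1 := rfl
    have hcard : N ^ (k-1)
        = (Finset.univ : Finset ({x : Fin k // x ≠ ci} → Fin N)).card := by
      rw [Finset.card_univ, Fintype.card_fun]
      congr 1
      · rw [Fintype.card_fin]
      · have : Fintype.card {x : Fin k // ¬ (x = ci)} = k - 1 := by
          rw [Fintype.card_subtype_compl, Fintype.card_subtype_eq, Fintype.card_fin]
        exact this.symm
    rw [hcard]
    apply Finset.card_le_card_of_injOn
      (fun w => fun x => w ⟨2 * ((x.1):ℕ), by have := x.1.isLt; omega⟩)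
    · intro w _
      exact Finset.mem_univ _
    · intro w1 hw1 w2 hw2 heq
      simp only [Finset.coe_filter, Set.mem_setOf_eq, Finset.mem_filter, Finset.mem_univ,
        true_and] at hw1 hw2
      obtain ⟨hP1w1, hC1⟩ := hw1
      obtain ⟨hP1w2, hC2⟩ := hw2
      -- the full ψ agree
      have hpsi : ∀ x : Fin k, w1 ⟨2*(x:ℕ), by have := x.isLt; omega⟩
          = w2 ⟨2*(x:ℕ), by have := x.isLt; omega⟩ := by
        intro x
        by_cases hx : x = ci
        · -- recover value at ci from neighbors
          subst hx
          obtain ⟨hb1, he1⟩ := hC1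
          obtain ⟨hb2, he2⟩ := hC2
          have hx1 : (⟨2*((ci:ℕ)), by have := ci.isLt; omega⟩ : Fin m)
              = ⟨2*(i:ℕ)+2, hb1⟩ := Fin.ext (show 2*(ci:ℕ) = 2*(i:ℕ)+2 by omega)
          rw [hx1, he1, he2]
          rw [P1_odd hm hP1w1 (by omega), P1_odd hm hP1w2 (by omega)]
          -- w1 ⟨2i⟩ = w2 ⟨2i⟩ from heq at coordinate i
          have hine : i ≠ ci := by
            intro h
            have : (i:ℕ) = (i:ℕ)+1 := by rw [← hciv, h]
            omega
          have := congrFun heq ⟨i, hine⟩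
          simpa using this
        · exact congrFun heq ⟨x, hx⟩
      funext l
      rw [P1_code hm hP1w1 l, P1_code hm hP1w2 l]
      have hdiv : (l:ℕ)/2 < k := by have := l.isLt; omega
      exact hpsi ⟨(l:ℕ)/2, hdiv⟩
  · -- no such i: the filtered set is empty
    convert Nat.zero_le _
    rw [Finset.card_eq_zero]
    apply Finset.filter_false_of_mem
    intro w _
    rintro ⟨hb, -⟩
    omega

lemma card_Q_le_PP {k N : ℕ} (hm : m = 2 * k) :
    (N:ℕ) ^ k ≤ ((Finset.univ : Finset (Fin m → Fin N)).filter
      (fun w => P1 w ∧ P2 w)).card + k * N ^ (k-1) := by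
  classical
  set Q := (Finset.univ : Finset (Fin m → Fin N)).filter (fun w => P1 w) with hQ
  set PP := (Finset.univ : Finset (Fin m → Fin N)).filter (fun w => P1 w ∧ P2 w) with hPP
  have hsub : Q ⊆ PP ∪ (Finset.univ : Finset (Fin k)).biUnion (fun i => Q.filter (Cbad k i)) := by
    intro w hw
    have hP1w : P1 w := by
      simp only [hQ, Finset.mem_filter, Finset.mem_univ, true_and] at hw
      exact hw
    by_cases hP2w : P2 w
    · exact Finset.mem_union_left _ (by simp [hPP, hP1w, hP2w])
    · apply Finset.mem_union_right
      rw [P2] at hP2w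
      push_neg at hP2w
      obtain ⟨j, hjodd, hlt, heq⟩ := hP2w
      have hik : (j:ℕ)/2 < k := by omega
      refine Finset.mem_biUnion.2 ⟨⟨(j:ℕ)/2, hik⟩, Finset.mem_univ _, ?_⟩
      rw [Finset.mem_filter]
      refine ⟨hw, ?_, ?_⟩
      · show 2*((j:ℕ)/2)+2 < m
        omega
      · have hc1 : (⟨2*((j:ℕ)/2)+2, by omega⟩ : Fin m) = ⟨(j:ℕ)+1, hlt⟩ :=
          Fin.ext (show 2*((j:ℕ)/2)+2 = (j:ℕ)+1 by omega)
        have hc2 : (⟨2*((j:ℕ)/2)+1, by omega⟩ : Fin m) = j :=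
          Fin.ext (show 2*((j:ℕ)/2)+1 = (j:ℕ) by omega)
        rw [hc1, hc2]
        exact heq
  calc (N:ℕ)^k = Q.card := (card_Q N hm).symm
    _ ≤ (PP ∪ (Finset.univ : Finset (Fin k)).biUnion (fun i => Q.filter (Cbad k i))).card :=
        Finset.card_le_card hsub
    _ ≤ PP.card + ((Finset.univ : Finset (Fin k)).biUnion (fun i => Q.filter (Cbad k i))).card :=
        Finset.card_union_le _ _
    _ ≤ PP.card + k * N ^ (k-1) := by
        apply Nat.add_le_add_left
        calc ((Finset.univ : Finset (Fin k)).biUnion (fun i => Q.filter (Cbad k i))).card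
            ≤ ∑ i : Fin k, (Q.filter (Cbad k i)).card := Finset.card_biUnion_le
          _ ≤ ∑ _i : Fin k, N ^ (k-1) := Finset.sum_le_sum (fun i _ => card_Cbad_le hm i)
          _ = k * N ^ (k-1) := by rw [Finset.sum_const, Finset.card_univ, Fintype.card_fin,
              smul_eq_mul]

end Stmt14
namespace Stmt14

lemma sum_pow_expand {𝒜 : Type*} [Ring 𝒜] (N : ℕ) (b : Fin N → 𝒜) :
    ∀ m : ℕ, (∑ i : Fin N, b i) ^ m
      = ∑ idx : Fin m → Fin N, (List.ofFn fun k => b (idx k)).prod := by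
  intro m
  induction m with
  | zero =>
    rw [pow_zero]
    have h1 : ∀ idx : Fin 0 → Fin N, (List.ofFn fun k : Fin 0 => b (idx k)).prod = 1 := by
      intro idx; simp
    rw [Finset.sum_congr rfl (fun idx _ => h1 idx), Finset.sum_const, Finset.card_univ,
      Fintype.card_fun]
    simp
  | succ m ih =>
    have step : ∑ idx : Fin (m+1) → Fin N, (List.ofFn fun k => b (idx k)).prod
        = ∑ p : Fin N × (Fin m → Fin N), b p.1 * (List.ofFn fun k => b (p.2 k)).prod := by
      refine (Fintype.sum_bijective (⇑(Fin.consEquiv (fun _ : Fin (m+1) => Fin N)))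
        ((Fin.consEquiv (fun _ : Fin (m+1) => Fin N)).bijective)
        (fun p => b p.1 * (List.ofFn fun k => b (p.2 k)).prod)
        (fun idx => (List.ofFn fun k => b (idx k)).prod) ?_).symm
      intro p
      simp only [Fin.consEquiv_apply, List.ofFn_succ, Fin.cons_zero, Fin.cons_succ,
        List.prod_cons]
    rw [pow_succ', ih, step, Fintype.sum_prod_type, Finset.sum_mul_sum]

end Stmt14
open Stmt14 in
/-- Boolean central limit theorem. For BMT independence with respect to the
empty digraphs, the normalized sums converge in moments to `(δ₋₁ + δ₊₁)/2`. -/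
theorem stmt14 {𝒜 : Type*} [Ring 𝒜] [Algebra ℂ 𝒜] (φ : 𝒜 →ₗ[ℂ] ℂ) (hφ : φ 1 = 1)
    (a : (N : ℕ) → Fin N → 𝒜) (E : (N : ℕ) → Fin N → Fin N → Prop)
    (hempty : ∀ N (v w : Fin N), ¬ E N v w)
    (hmean : ∀ N i, φ (a N i) = 0)
    (hvar : ∀ N i, φ (a N i * a N i) = 1)
    (hindep : ∀ N, BMTIndepVars φ (E N) (a N))
    (hmom : ∀ n : ℕ, ∃ C : ℝ, ∀ N, ∀ i : Fin N, ‖φ (a N i ^ n)‖ ≤ C) :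
    ∀ m : ℕ, 1 ≤ m →
      Tendsto (fun N : ℕ => φ ((∑ i : Fin N, a N i) ^ m) / ((Real.sqrt N : ℝ) : ℂ) ^ m)
        atTop (nhds (if Even m then 1 else 0)) := by
  intro m hm
  -- uniform moment bound
  choose Cf hCf using hmom
  set C : ℝ := 1 + ∑ n ∈ Finset.range (m+1), |Cf n| with hCdef
  have hsumnn : (0:ℝ) ≤ ∑ n ∈ Finset.range (m+1), |Cf n| :=
    Finset.sum_nonneg (fun _ _ => abs_nonneg _)
  have hC1 : (1:ℝ) ≤ C := by rw [hCdef]; linarith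
  have hC0 : (0:ℝ) ≤ C := by linarith
  have hCb : ∀ (N : ℕ) (i : Fin N) (e : ℕ), e ≤ m → ‖φ (a N i ^ e)‖ ≤ C := by
    intro N i e he
    calc ‖φ (a N i ^ e)‖ ≤ Cf e := hCf e N i
      _ ≤ |Cf e| := le_abs_self _
      _ ≤ ∑ n ∈ Finset.range (m+1), |Cf n| :=
          Finset.single_le_sum (fun n _ => abs_nonneg (Cf n)) (Finset.mem_range.2 (by omega))
      _ ≤ C := by rw [hCdef]; linarith
  -- moment expansion
  have key : ∀ N : ℕ, φ ((∑ i : Fin N, a N i) ^ m)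
      = ∑ idx : Fin m → Fin N, ∏ s ∈ starts idx, φ (a N (idx s) ^ (cls idx s).card) := by
    intro N
    rw [sum_pow_expand, map_sum]
    exact Finset.sum_congr rfl (fun idx _ => word_formula φ (hempty N) (hindep N) idx)
  have hFone : ∀ (N : ℕ) (idx : Fin m → Fin N), AllTwo idx →
      ∏ s ∈ starts idx, φ (a N (idx s) ^ (cls idx s).card) = 1 := by
    intro N idx hA
    apply Finset.prod_eq_one
    intro s hs
    rw [hA s hs, pow_two, hvar]
  have hFbound : ∀ (N : ℕ) (idx : Fin m → Fin N),
      ‖∏ s ∈ starts idx, φ (a N (idx s) ^ (cls idx s).card)‖ ≤ C ^ m := by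
    intro N idx
    rw [norm_prod]
    calc ∏ s ∈ starts idx, ‖φ (a N (idx s) ^ (cls idx s).card)‖
        ≤ ∏ _s ∈ starts idx, C :=
          Finset.prod_le_prod (fun _ _ => norm_nonneg _)
            (fun s _ => hCb N (idx s) _
              (le_trans (Finset.card_le_univ _) (by simp)))
      _ = C ^ (starts idx).card := Finset.prod_const C
      _ ≤ C ^ m := pow_le_pow_right₀ hC1 (le_trans (Finset.card_le_univ _) (by simp))
  set r0 := (m-1)/2 with hr0
  have hbadcard : ∀ (N : ℕ) (idx : Fin m → Fin N), ¬ AllTwo idx →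
      (∏ s ∈ starts idx, φ (a N (idx s) ^ (cls idx s).card)) ≠ 0 →
      (starts idx).card ≤ r0 := by
    intro N idx hA hne
    have h2 : ∀ s ∈ starts idx, 2 ≤ (cls idx s).card := by
      intro s hs
      have h1 : 0 < (cls idx s).card := Finset.card_pos.2 ⟨s, self_mem_cls⟩
      rcases Nat.lt_or_ge (cls idx s).card 2 with h | h
      · exfalso
        have hc1 : (cls idx s).card = 1 := by omega
        apply hne
        apply Finset.prod_eq_zero hs
        rw [hc1, pow_one, hmean]
      · exact h
    obtain ⟨s0, hs0, hs0ne⟩ : ∃ s ∈ starts idx, (cls idx s).card ≠ 2 := by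
      by_contra hall
      push_neg at hall
      exact hA hall
    have hs03 : 3 ≤ (cls idx s0).card := by have := h2 s0 hs0; omega
    have hsum := sum_cls_card idx
    have herase : ∑ s ∈ (starts idx).erase s0, (cls idx s).card + (cls idx s0).card = m := by
      rw [Finset.sum_erase_add _ _ hs0]; exact hsum
    have hlow : ((starts idx).erase s0).card * 2
        ≤ ∑ s ∈ (starts idx).erase s0, (cls idx s).card := by
      have := Finset.card_nsmul_le_sum ((starts idx).erase s0)
        (fun s => (cls idx s).card) 2 (fun x hx => h2 x (Finset.mem_of_mem_erase hx))
      simpa [smul_eq_mul] using this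
    have hce : ((starts idx).erase s0).card = (starts idx).card - 1 :=
      Finset.card_erase_of_mem hs0
    have hpos : 1 ≤ (starts idx).card := Finset.card_pos.2 ⟨s0, hs0⟩
    omega
  have hsplit : ∀ N : ℕ, φ ((∑ i : Fin N, a N i) ^ m)
      = (((Finset.univ.filter (fun idx : Fin m → Fin N => AllTwo idx)).card : ℕ) : ℂ)
        + ∑ idx ∈ Finset.univ.filter (fun idx : Fin m → Fin N => ¬ AllTwo idx),
            ∏ s ∈ starts idx, φ (a N (idx s) ^ (cls idx s).card) := by
    intro N
    rw [key N, ← Finset.sum_filter_add_sum_filter_not Finset.univ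
      (fun idx : Fin m → Fin N => AllTwo idx)]
    congr 1
    rw [Finset.sum_congr rfl (fun idx hidx => hFone N idx (Finset.mem_filter.1 hidx).2)]
    rw [Finset.sum_const, nsmul_eq_mul, mul_one]
  have hRbound : ∀ N : ℕ, 1 ≤ N →
      ‖∑ idx ∈ Finset.univ.filter (fun idx : Fin m → Fin N => ¬ AllTwo idx),
          ∏ s ∈ starts idx, φ (a N (idx s) ^ (cls idx s).card)‖
        ≤ (2:ℝ)^m * C^m * (N:ℝ)^r0 := by
    intro N hN
    calc ‖∑ idx ∈ Finset.univ.filter (fun idx : Fin m → Fin N => ¬ AllTwo idx),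
          ∏ s ∈ starts idx, φ (a N (idx s) ^ (cls idx s).card)‖
        ≤ ∑ idx ∈ Finset.univ.filter (fun idx : Fin m → Fin N => ¬ AllTwo idx),
            ‖∏ s ∈ starts idx, φ (a N (idx s) ^ (cls idx s).card)‖ := norm_sum_le _ _
      _ = ∑ idx ∈ (Finset.univ.filter (fun idx : Fin m → Fin N => ¬ AllTwo idx)).filter
            (fun idx => (starts idx).card ≤ r0),
            ‖∏ s ∈ starts idx, φ (a N (idx s) ^ (cls idx s).card)‖ :=
          (Finset.sum_filter_of_ne (fun idx hidx hne =>
            hbadcard N idx ((Finset.mem_filter.1 hidx).2)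
              (norm_ne_zero_iff.mp hne))).symm
      _ ≤ ((Finset.univ.filter (fun idx : Fin m → Fin N => ¬ AllTwo idx)).filter
            (fun idx => (starts idx).card ≤ r0)).card • (C^m) :=
          Finset.sum_le_card_nsmul _ _ _ (fun idx _ => hFbound N idx)
      _ ≤ ((2^m * N^r0 : ℕ) : ℝ) * C^m := by
          rw [nsmul_eq_mul]
          apply mul_le_mul_of_nonneg_right _ (pow_nonneg hC0 m)
          have hsub : (Finset.univ.filter (fun idx : Fin m → Fin N => ¬ AllTwo idx)).filter
              (fun idx => (starts idx).card ≤ r0)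
              ⊆ Finset.univ.filter (fun idx : Fin m → Fin N => (starts idx).card ≤ r0) := by
            intro x hx
            simp only [Finset.mem_filter, Finset.mem_univ, true_and] at hx ⊢
            exact hx.2
          have hb := card_badset_le (show 0 < m by omega) N hN r0
          exact_mod_cast le_trans (Finset.card_le_card hsub) hb
      _ = (2:ℝ)^m * C^m * (N:ℝ)^r0 := by push_cast; ring
  rcases Nat.even_or_odd m with hev | hodd
  · -- even case
    obtain ⟨k, hk⟩ := hev
    have hm2 : m = 2 * k := by omega
    have hk1 : 1 ≤ k := by omega
    have hr0k : r0 = k - 1 := by omega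
    rw [if_pos ⟨k, hk⟩]
    have hAPP : ∀ N : ℕ, Finset.univ.filter (fun idx : Fin m → Fin N => AllTwo idx)
        = Finset.univ.filter (fun w : Fin m → Fin N => P1 w ∧ P2 w) := by
      intro N
      apply Finset.filter_congr
      intro w _
      constructor
      · intro hA
        exact pattern_of_allTwo (by omega) hA
      · intro hp
        exact allTwo_of_pattern (by omega) hp.1 hp.2
    rw [tendsto_iff_norm_sub_tendsto_zero]
    apply squeeze_zero' (Filter.Eventually.of_forall (fun N => norm_nonneg _))
      ?_ (tendsto_const_div_atTop_nhds_zero_nat ((k:ℝ) + 2^m * C^m))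
    filter_upwards [Filter.eventually_ge_atTop 1] with N hN
    have hN0 : (0:ℝ) < (N:ℝ) := by
      have : (1:ℝ) ≤ (N:ℝ) := by exact_mod_cast hN
      linarith
    have hNk0 : (0:ℝ) < (N:ℝ)^k := pow_pos hN0 k
    have hden : ((Real.sqrt N : ℝ) : ℂ) ^ m = (((N:ℝ)^k : ℝ) : ℂ) := by
      rw [← Complex.ofReal_pow]
      congr 1
      rw [hm2, pow_mul, Real.sq_sqrt (Nat.cast_nonneg N)]
    set P := (Finset.univ.filter (fun idx : Fin m → Fin N => AllTwo idx)).card with hP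
    have hPub : P ≤ N^k := by rw [hP, hAPP N]; exact card_PP_le N hm2
    have hPlb : N^k ≤ P + k * N^(k-1) := by rw [hP, hAPP N]; exact card_Q_le_PP hm2
    have hgap : N^k - P ≤ k * N^(k-1) := by omega
    rw [hsplit N, hden]
    set R : ℂ := ∑ idx ∈ Finset.univ.filter (fun idx : Fin m → Fin N => ¬ AllTwo idx),
        ∏ s ∈ starts idx, φ (a N (idx s) ^ (cls idx s).card) with hRdef
    have hd0 : (((N:ℝ)^k : ℝ) : ℂ) ≠ 0 := by
      rw [Complex.ofReal_ne_zero]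
      exact ne_of_gt hNk0
    have hfrac : ((P:ℂ) + R) / (((N:ℝ)^k : ℝ) : ℂ) - 1
        = (((P:ℂ) + R) - (((N:ℝ)^k : ℝ) : ℂ)) / (((N:ℝ)^k : ℝ) : ℂ) := by
      rw [sub_div, div_self hd0]
    rw [hfrac, norm_div, Complex.norm_real, Real.norm_eq_abs, abs_of_pos hNk0]
    have h1 : ‖(P : ℂ) - (((N:ℝ)^k : ℝ) : ℂ)‖ ≤ (k:ℝ) * (N:ℝ)^(k-1) := by
      have hcast : (((N:ℝ)^k : ℝ) : ℂ) = ((N^k : ℕ) : ℂ) := by push_cast; ring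
      rw [hcast, norm_sub_rev]
      have hsub : ((N^k : ℕ) : ℂ) - (P : ℂ) = ((N^k - P : ℕ) : ℂ) := (Nat.cast_sub hPub).symm
      rw [hsub, Complex.norm_natCast]
      calc ((N^k - P : ℕ) : ℝ) ≤ ((k * N^(k-1) : ℕ) : ℝ) := by exact_mod_cast hgap
        _ = (k:ℝ) * (N:ℝ)^(k-1) := by push_cast; ring
    have h2 : ‖R‖ ≤ (2:ℝ)^m * C^m * (N:ℝ)^(k-1) := by
      rw [← hr0k]
      exact hRbound N hN
    have hnum : ‖(P:ℂ) + R - (((N:ℝ)^k : ℝ) : ℂ)‖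
        ≤ ((k:ℝ) + 2^m * C^m) * (N:ℝ)^(k-1) := by
      calc ‖(P:ℂ) + R - (((N:ℝ)^k : ℝ) : ℂ)‖
          = ‖((P:ℂ) - (((N:ℝ)^k : ℝ) : ℂ)) + R‖ := by congr 1; ring
        _ ≤ ‖(P:ℂ) - (((N:ℝ)^k : ℝ) : ℂ)‖ + ‖R‖ := norm_add_le _ _
        _ ≤ (k:ℝ) * (N:ℝ)^(k-1) + (2:ℝ)^m * C^m * (N:ℝ)^(k-1) := add_le_add h1 h2
        _ = ((k:ℝ) + 2^m * C^m) * (N:ℝ)^(k-1) := by ring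
    have hNk : (N:ℝ)^k = (N:ℝ)^(k-1) * (N:ℝ) := by
      rw [← pow_succ]
      congr 1
      omega
    calc ‖(P:ℂ) + R - (((N:ℝ)^k : ℝ) : ℂ)‖ / (N:ℝ)^k
        ≤ (((k:ℝ) + 2^m * C^m) * (N:ℝ)^(k-1)) / (N:ℝ)^k :=
          (div_le_div_iff_of_pos_right hNk0).2 hnum
      _ = ((k:ℝ) + 2^m * C^m) / (N:ℝ) := by
          rw [hNk, mul_comm ((k:ℝ) + 2^m * C^m) ((N:ℝ)^(k-1))]
          exact mul_div_mul_left _ _ (ne_of_gt (pow_pos hN0 (k-1)))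
  · -- odd case
    have hm1 : m % 2 = 1 := Nat.odd_iff.1 hodd
    have hnotev : ¬ Even m := by rw [Nat.even_iff]; omega
    rw [if_neg hnotev]
    have hAempty : ∀ N : ℕ,
        Finset.univ.filter (fun idx : Fin m → Fin N => AllTwo idx) = ∅ := by
      intro N
      rw [Finset.filter_eq_empty_iff]
      intro w _ hA
      have := allTwo_even hA
      omega
    have hsqrt_tendsto : Tendsto Real.sqrt atTop atTop :=
      tendsto_atTop_atTop.2 (fun b => ⟨max 0 b ^ 2, fun x hx => by
        calc b ≤ max 0 b := le_max_right _ _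
          _ = Real.sqrt ((max 0 b)^2) := by rw [Real.sqrt_sq (le_max_left _ _)]
          _ ≤ Real.sqrt x := Real.sqrt_le_sqrt hx⟩)
    apply squeeze_zero_norm' ?_ (Tendsto.div_atTop (tendsto_const_nhds (x := (2:ℝ)^m * C^m))
      (hsqrt_tendsto.comp tendsto_natCast_atTop_atTop))
    filter_upwards [Filter.eventually_ge_atTop 1] with N hN
    have hN0 : (0:ℝ) < (N:ℝ) := by
      have : (1:ℝ) ≤ (N:ℝ) := by exact_mod_cast hN
      linarith
    have hs0 : (0:ℝ) < Real.sqrt N := Real.sqrt_pos.2 hN0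
    have hm2r : m = 2 * r0 + 1 := by omega
    rw [hsplit N, hAempty N]
    simp only [Finset.card_empty, Nat.cast_zero, zero_add]
    set R : ℂ := ∑ idx ∈ Finset.univ.filter (fun idx : Fin m → Fin N => ¬ AllTwo idx),
        ∏ s ∈ starts idx, φ (a N (idx s) ^ (cls idx s).card) with hRdef
    rw [norm_div]
    have hdennorm : ‖((Real.sqrt N : ℝ) : ℂ) ^ m‖ = (N:ℝ)^r0 * Real.sqrt N := by
      rw [norm_pow, Complex.norm_real, Real.norm_eq_abs, abs_of_nonneg (Real.sqrt_nonneg _)]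
      rw [hm2r, pow_succ, pow_mul, Real.sq_sqrt (Nat.cast_nonneg N)]
    rw [hdennorm]
    have hb : ‖R‖ ≤ (2:ℝ)^m * C^m * (N:ℝ)^r0 := hRbound N hN
    have hpos : (0:ℝ) < (N:ℝ)^r0 * Real.sqrt N := mul_pos (pow_pos hN0 r0) hs0
    calc ‖R‖ / ((N:ℝ)^r0 * Real.sqrt N)
        ≤ ((2:ℝ)^m * C^m * (N:ℝ)^r0) / ((N:ℝ)^r0 * Real.sqrt N) :=
          (div_le_div_iff_of_pos_right hpos).2 hb
      _ = (2:ℝ)^m * C^m / Real.sqrt N := by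
          rw [mul_comm ((2:ℝ)^m * C^m) ((N:ℝ)^r0)]
          exact mul_div_mul_left _ _ (ne_of_gt (pow_pos hN0 r0))
end
end

section
/- Let (𝒜, φ) be a non-commutative probability space and, for each N ≥ 1, let a_1, …, a_N ∈ 𝒜 satisfy φ(a_i) = 0, φ(a_i²) = 1, have uniformly bounded moments of all orders (for each n ≥ 1, sup_{i,N} |φ(a_i^n)| < ∞), and be BMT independent with respect to the digraph G_N = ([N], E_N) with E_N = {(j, i) : i < j}. Then for every integer k ≥ 1, lim_{N→∞} φ(((a_1 + ⋯ + a_N)/√N)^{2k}) = (2k choose k)/2^k, and the odd moments tend to 0; i.e., the normalized sums converge in moments to the arcsine distribution on (−√2, √2). -/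
open scoped Classical
open Filter

noncomputable section

def GoodW {m N : ℕ} (w : Fin m → Fin N) : Prop :=
  (∀ p : Fin m, (Finset.univ.filter fun q => w q = w p).card = 2) ∧
  (∀ p l q : Fin m, p < l → l < q → w p = w q → w l ≠ w p → w p < w l)

def Gcnt (N m : ℕ) : ℕ := (Finset.univ.filter fun w : Fin m → Fin N => GoodW w).card

def Dodd : ℕ → ℕ
  | 0 => 1
  | (k+1) => (2*k+1) * Dodd k

lemma Dodd_mul_eq (k : ℕ) : Dodd k * (2^k * k.factorial) = (2*k).factorial := by
  induction k with
  | zero => simp [Dodd]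
  | succ k ih =>
      have h2 : 2*(k+1) = 2*k+2 := by ring
      rw [h2, Nat.factorial_succ, show 2*k+1+1 = (2*k+1)+1 from rfl, Nat.factorial_succ]
      rw [Dodd, Nat.factorial_succ]
      calc (2*k+1) * Dodd k * (2 ^ (k+1) * ((k+1) * k.factorial))
          = ((2*k+1) * (2*(k+1))) * (Dodd k * (2^k * k.factorial)) := by ring
        _ = (2*k+2) * ((2*k+1) * (2*k).factorial) := by rw [ih]; ring

lemma GoodW_even {m N : ℕ} {w : Fin m → Fin N} (h : GoodW w) : ∃ r, m = 2*r := by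
  have hm : (Finset.univ : Finset (Fin m)).card
      = ∑ i ∈ Finset.univ.image w, (Finset.univ.filter fun q => w q = i).card :=
    Finset.card_eq_sum_card_fiberwise (fun x _ => Finset.mem_image_of_mem w (Finset.mem_univ x))
  rw [Finset.card_univ, Fintype.card_fin] at hm
  refine ⟨(Finset.univ.image w).card, ?_⟩
  have hcong : ∀ i ∈ Finset.univ.image w, (Finset.univ.filter fun q => w q = i).card = 2 := by
    intro i hi
    obtain ⟨p, _, rfl⟩ := Finset.mem_image.1 hi
    exact h.1 p
  have h2 : ∑ i ∈ Finset.univ.image w, (Finset.univ.filter fun q => w q = i).card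
      = 2 * (Finset.univ.image w).card := by
    rw [Finset.sum_congr rfl hcong, Finset.sum_const, smul_eq_mul, mul_comm]
  omega

lemma Gcnt_zero (N : ℕ) : Gcnt N 0 = 1 := by
  rw [Gcnt]
  have : (Finset.univ.filter fun w : Fin 0 → Fin N => GoodW w) = Finset.univ := by
    ext w
    simp only [Finset.mem_filter, Finset.mem_univ, true_and, iff_true]
    exact ⟨fun p => p.elim0, fun p => p.elim0⟩
  rw [this, Finset.card_univ]
  simp

lemma Gcnt_odd {N m : ℕ} (hm : Odd m) : Gcnt N m = 0 := by
  rw [Gcnt, Finset.card_eq_zero]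
  ext w
  simp only [Finset.mem_filter, Finset.mem_univ, true_and, Finset.notMem_empty, iff_false]
  intro h
  obtain ⟨r, hr⟩ := GoodW_even h
  obtain ⟨s, hs⟩ := hm
  omega


/-- insertion position map: skips positions `j` and `j+1`. -/
def djf (m : ℕ) (j : Fin (m+1)) (i : Fin m) : Fin (m+2) :=
  ⟨if i.val < j.val then i.val else i.val + 2, by have := i.isLt; split <;> omega⟩

lemma djf_val (m : ℕ) (j : Fin (m+1)) (i : Fin m) :
    (djf m j i).val = if i.val < j.val then i.val else i.val + 2 := rfl

lemma djf_lt_iff (m : ℕ) (j : Fin (m+1)) (i i' : Fin m) :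
    djf m j i < djf m j i' ↔ i < i' := by
  simp only [Fin.lt_def, djf_val]
  split <;> split <;> omega

lemma djf_inj (m : ℕ) (j : Fin (m+1)) {i i' : Fin m} (h : djf m j i = djf m j i') : i = i' := by
  have := congrArg Fin.val h
  simp only [djf_val] at this
  apply Fin.ext
  split at this <;> split at this <;> omega

lemma djf_ne_pair (m : ℕ) (j : Fin (m+1)) (i : Fin m) :
    (djf m j i).val ≠ j.val ∧ (djf m j i).val ≠ j.val + 1 := by
  simp only [djf_val]
  have := i.isLt
  split <;> omega

lemma djf_surj (m : ℕ) (j : Fin (m+1)) (t : Fin (m+2)) (h1 : t.val ≠ j.val)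
    (h2 : t.val ≠ j.val + 1) : ∃ i, djf m j i = t := by
  have hj := j.isLt
  have ht := t.isLt
  rcases Nat.lt_or_ge t.val j.val with h | h
  · exact ⟨⟨t.val, by omega⟩, by apply Fin.ext; simp only [djf_val]; split <;> omega⟩
  · exact ⟨⟨t.val - 2, by omega⟩, by apply Fin.ext; simp only [djf_val]; split <;> omega⟩

/-- Compatibility: `w` is obtained from `u` by inserting the pair `last, last`
at positions `j`, `j+1`. -/
def CompatW (N m : ℕ) (j : Fin (m+1)) (w : Fin (m+2) → Fin (N+1)) (u : Fin m → Fin N) : Prop :=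
  (∀ i, w (djf m j i) = Fin.castSucc (u i)) ∧
  (∀ t, w t = Fin.last N ↔ t.val = j.val ∨ t.val = j.val + 1)

lemma compat_fiber_card {N m : ℕ} {j : Fin (m+1)} {w : Fin (m+2) → Fin (N+1)}
    {u : Fin m → Fin N} (hc : CompatW N m j w u) (p : Fin m) :
    (Finset.univ.filter fun q : Fin m => u q = u p).card
      = (Finset.univ.filter fun t : Fin (m+2) => w t = w (djf m j p)).card := by
  apply Finset.card_bij (fun q _ => djf m j q)
  · intro q hq
    simp only [Finset.mem_filter, Finset.mem_univ, true_and] at hq ⊢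
    rw [hc.1 q, hc.1 p, hq]
  · intro q _ q' _ h
    exact djf_inj m j h
  · intro t ht
    simp only [Finset.mem_filter, Finset.mem_univ, true_and] at ht
    have htne : w t ≠ Fin.last N := by
      rw [ht, hc.1 p]
      exact (Fin.castSucc_lt_last _).ne
    have hpr : ¬(t.val = j.val ∨ t.val = j.val + 1) := fun h => htne ((hc.2 t).2 h)
    push_neg at hpr
    obtain ⟨i, rfl⟩ := djf_surj m j t hpr.1 hpr.2
    refine ⟨i, ?_, rfl⟩
    simp only [Finset.mem_filter, Finset.mem_univ, true_and]
    have : Fin.castSucc (u i) = Fin.castSucc (u p) := by rw [← hc.1 i, ← hc.1 p, ht]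
    exact Fin.castSucc_inj.mp this

lemma compat_goodW_iff {N m : ℕ} {j : Fin (m+1)} {w : Fin (m+2) → Fin (N+1)}
    {u : Fin m → Fin N} (hc : CompatW N m j w u) : GoodW w ↔ GoodW u := by
  have hj := j.isLt
  constructor
  · intro hw
    constructor
    · intro p
      rw [compat_fiber_card hc p]
      exact hw.1 (djf m j p)
    · intro p l q hpl hlq hpq hlp
      have h1 : w (djf m j p) = w (djf m j q) := by rw [hc.1 p, hc.1 q, hpq]
      have h2 : w (djf m j l) ≠ w (djf m j p) := by
        rw [hc.1 l, hc.1 p]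
        exact fun h => hlp (Fin.castSucc_inj.mp h)
      have := hw.2 _ _ _ ((djf_lt_iff m j p l).2 hpl) ((djf_lt_iff m j l q).2 hlq) h1 h2
      rw [hc.1 p, hc.1 l] at this
      exact Fin.castSucc_lt_castSucc_iff.mp this
  · intro hu
    constructor
    · intro p
      by_cases hp : w p = Fin.last N
      · have hset : (Finset.univ.filter fun t : Fin (m+2) => w t = w p)
            = {⟨j.val, by omega⟩, ⟨j.val + 1, by omega⟩} := by
          ext t
          simp only [Finset.mem_filter, Finset.mem_univ, true_and, Finset.mem_insert,
            Finset.mem_singleton]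
          rw [hp, hc.2 t]
          simp [Fin.ext_iff]
        rw [hset]
        rw [Finset.card_insert_of_notMem (by simp [Fin.ext_iff]), Finset.card_singleton]
      · have hpr : ¬(p.val = j.val ∨ p.val = j.val + 1) := fun h => hp ((hc.2 p).2 h)
        push_neg at hpr
        obtain ⟨p₀, rfl⟩ := djf_surj m j p hpr.1 hpr.2
        rw [← compat_fiber_card hc p₀]
        exact hu.1 p₀
    · intro p l q hpl hlq hpq hlp
      by_cases hp : w p = Fin.last N
      · have hq : w q = Fin.last N := by rw [← hpq, hp]
        have h1 := (hc.2 p).1 hp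
        have h2 := (hc.2 q).1 hq
        have h3 : p.val < l.val := hpl
        have h4 : l.val < q.val := hlq
        omega
      · by_cases hl : w l = Fin.last N
        · rw [hl]
          exact lt_of_le_of_ne (Fin.le_last _) hp
        · have hq : w q ≠ Fin.last N := by rw [← hpq]; exact hp
          have hprp : ¬(p.val = j.val ∨ p.val = j.val + 1) := fun h => hp ((hc.2 p).2 h)
          have hprl : ¬(l.val = j.val ∨ l.val = j.val + 1) := fun h => hl ((hc.2 l).2 h)
          have hprq : ¬(q.val = j.val ∨ q.val = j.val + 1) := fun h => hq ((hc.2 q).2 h)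
          push_neg at hprp hprl hprq
          obtain ⟨p₀, rfl⟩ := djf_surj m j p hprp.1 hprp.2
          obtain ⟨l₀, rfl⟩ := djf_surj m j l hprl.1 hprl.2
          obtain ⟨q₀, rfl⟩ := djf_surj m j q hprq.1 hprq.2
          rw [hc.1 p₀, hc.1 l₀] at *
          rw [hc.1 q₀] at hpq
          have := hu.2 p₀ l₀ q₀ ((djf_lt_iff m j p₀ l₀).1 hpl) ((djf_lt_iff m j l₀ q₀).1 hlq)
            (Fin.castSucc_inj.mp hpq) (fun h => hlp (by rw [h]))
          exact Fin.castSucc_lt_castSucc_iff.mpr this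

/-- insertion of the pair `(last, last)` at positions `j, j+1`. -/
def insW (N m : ℕ) (j : Fin (m+1)) (u : Fin m → Fin N) : Fin (m+2) → Fin (N+1) :=
  fun t => if h : t.val = j.val ∨ t.val = j.val + 1 then Fin.last N
    else Fin.castSucc (u ⟨if t.val < j.val then t.val else t.val - 2, by
      have h1 := t.isLt; have h2 := j.isLt; split <;> omega⟩)

lemma insW_compat (N m : ℕ) (j : Fin (m+1)) (u : Fin m → Fin N) :
    CompatW N m j (insW N m j u) u := by
  constructor
  · intro i
    have hd := djf_ne_pair m j i
    rw [insW, dif_neg (by omega)]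
    congr 1
    apply congrArg
    apply Fin.ext
    simp only [djf_val]
    have := i.isLt
    split <;> (try split) <;> omega
  · intro t
    constructor
    · intro h
      by_contra hc
      rw [insW, dif_neg hc] at h
      exact (Fin.castSucc_lt_last _).ne h
    · intro h
      rw [insW, dif_pos h]

def Cset (N m : ℕ) (j : Fin (m+1)) : Finset (Fin (m+2) → Fin (N+1)) :=
  Finset.univ.filter fun w => GoodW w ∧
    w ⟨j.val, by omega⟩ = Fin.last N ∧ w ⟨j.val + 1, by have := j.isLt; omega⟩ = Fin.last N

/-- a good word in `Cset j` takes the value `last` exactly on positions `j`, `j+1`. -/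
lemma Cset_last_iff {N m : ℕ} {j : Fin (m+1)} {w : Fin (m+2) → Fin (N+1)}
    (hw : w ∈ Cset N m j) (t : Fin (m+2)) :
    w t = Fin.last N ↔ t.val = j.val ∨ t.val = j.val + 1 := by
  have hj := j.isLt
  simp only [Cset, Finset.mem_filter, Finset.mem_univ, true_and] at hw
  obtain ⟨hg, h1, h2⟩ := hw
  constructor
  · intro h
    by_contra hc
    push_neg at hc
    -- three distinct elements of the fiber of `last`
    have hsub : ({⟨j.val, by omega⟩, ⟨j.val + 1, by omega⟩, t} : Finset (Fin (m+2)))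
        ⊆ Finset.univ.filter fun q => w q = w ⟨j.val, by omega⟩ := by
      intro x hx
      simp only [Finset.mem_insert, Finset.mem_singleton] at hx
      simp only [Finset.mem_filter, Finset.mem_univ, true_and]
      rcases hx with rfl | rfl | rfl
      · rfl
      · rw [h2, h1]
      · rw [h, h1]
    have hcard : ({⟨j.val, by omega⟩, ⟨j.val + 1, by omega⟩, t} : Finset (Fin (m+2))).card = 3 := by
      rw [Finset.card_insert_of_notMem (by simp [Fin.ext_iff]; omega),
        Finset.card_insert_of_notMem (by simp [Fin.ext_iff]; omega), Finset.card_singleton]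
    have := Finset.card_le_card hsub
    rw [hcard, hg.1 _] at this
    omega
  · intro h
    rcases h with h | h
    · have : t = (⟨j.val, by omega⟩ : Fin (m+2)) := Fin.ext h
      rw [this, h1]
    · have : t = (⟨j.val + 1, by omega⟩ : Fin (m+2)) := Fin.ext h
      rw [this, h2]

lemma card_Cset (N m : ℕ) (j : Fin (m+1)) : (Cset N m j).card = Gcnt N m := by
  have hj := j.isLt
  rw [Gcnt]
  symm
  refine Finset.card_bij' (fun u _ => insW N m j u)
    (fun w hw => fun i => (w (djf m j i)).castPred (by
      have hd := djf_ne_pair m j i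
      intro hcontra
      rw [Cset_last_iff hw] at hcontra
      omega)) ?_ ?_ ?_ ?_
  -- insW maps good words into Cset
  · intro u hu
    simp only [Finset.mem_filter, Finset.mem_univ, true_and] at hu
    have hc := insW_compat N m j u
    simp only [Cset, Finset.mem_filter, Finset.mem_univ, true_and]
    refine ⟨(compat_goodW_iff hc).2 hu, ?_, ?_⟩
    · rw [(hc.2 _)]; left; rfl
    · rw [(hc.2 _)]; right; rfl
  -- deletion maps Cset into good words
  · intro w hw
    simp only [Finset.mem_filter, Finset.mem_univ, true_and]
    have hc : CompatW N m j w (fun i => (w (djf m j i)).castPred (by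
        have hd := djf_ne_pair m j i
        intro hcontra
        rw [Cset_last_iff hw] at hcontra
        omega)) := by
      constructor
      · intro i
        rw [Fin.castSucc_castPred]
      · intro t
        exact Cset_last_iff hw t
    have hgw : GoodW w := by
      simp only [Cset, Finset.mem_filter, Finset.mem_univ, true_and] at hw
      exact hw.1
    exact (compat_goodW_iff hc).1 hgw
  -- left inverse
  · intro u hu
    funext i
    have hc := insW_compat N m j u
    apply Fin.castSucc_inj.mp
    show ((insW N m j u (djf m j i)).castPred _).castSucc = _
    rw [Fin.castSucc_castPred]
    exact hc.1 i
  -- right inverse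
  · intro w hw
    funext t
    by_cases h : t.val = j.val ∨ t.val = j.val + 1
    · show insW N m j _ t = w t
      rw [insW, dif_pos h, eq_comm, Cset_last_iff hw]
      exact h
    · push_neg at h
      obtain ⟨i, rfl⟩ := djf_surj m j t h.1 h.2
      have hc2 := djf_ne_pair m j i
      show insW N m j _ (djf m j i) = w (djf m j i)
      rw [insW, dif_neg (by omega)]
      rw [Fin.castSucc_castPred]
      congr 2
      apply Fin.ext
      simp only [djf_val]
      have := i.isLt
      split <;> (try split) <;> omega

lemma goodW_castSucc_iff {M N : ℕ} (u : Fin M → Fin N) :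
    GoodW (fun t => (u t).castSucc) ↔ GoodW u := by
  have hfib : ∀ p : Fin M, (Finset.univ.filter fun q => (u q).castSucc = (u p).castSucc)
      = Finset.univ.filter fun q => u q = u p := by
    intro p; ext q; simp [Fin.castSucc_inj]
  constructor <;> intro h <;> constructor
  · intro p
    have h1 := h.1 p
    simp only [] at h1
    rwa [hfib p] at h1
  · intro p l q h1 h2 h3 h4
    exact Fin.castSucc_lt_castSucc_iff.mp
      (h.2 p l q h1 h2 (congrArg Fin.castSucc h3) (fun hh => h4 (Fin.castSucc_inj.mp hh)))
  · intro p
    have h1 := h.1 p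
    show (Finset.univ.filter fun q => (u q).castSucc = (u p).castSucc).card = 2
    rwa [hfib p]
  · intro p l q h1 h2 h3 h4
    exact Fin.castSucc_lt_castSucc_iff.mpr
      (h.2 p l q h1 h2 (Fin.castSucc_inj.mp h3) (fun hh => h4 (congrArg Fin.castSucc hh)))

lemma card_nolast (N M : ℕ) :
    (Finset.univ.filter fun w : Fin M → Fin (N+1) =>
      GoodW w ∧ ∀ t, w t ≠ Fin.last N).card = Gcnt N M := by
  rw [Gcnt]
  symm
  refine Finset.card_bij' (fun u _ => fun t => (u t).castSucc)
    (fun w hw => fun t => (w t).castPred (by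
      simp only [Finset.mem_filter, Finset.mem_univ, true_and] at hw
      exact hw.2 t)) ?_ ?_ ?_ ?_
  · intro u hu
    simp only [Finset.mem_filter, Finset.mem_univ, true_and] at hu ⊢
    exact ⟨(goodW_castSucc_iff u).2 hu, fun t => (Fin.castSucc_lt_last _).ne⟩
  · intro w hw
    simp only [Finset.mem_filter, Finset.mem_univ, true_and] at hw ⊢
    have hrw : (fun t => (((w t).castPred (hw.2 t : w t ≠ Fin.last N))).castSucc) = w := by
      funext t; exact Fin.castSucc_castPred _ _
    exact (goodW_castSucc_iff _).1 (by rw [hrw]; exact hw.1)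
  · intro u hu
    funext t
    exact Fin.castPred_castSucc _
  · intro w hw
    funext t
    exact Fin.castSucc_castPred _ _
lemma good_last_mem_Cset {N m : ℕ} {w : Fin (m+2) → Fin (N+1)} (hw : GoodW w)
    (t₀ : Fin (m+2)) (ht₀ : w t₀ = Fin.last N) : ∃ j : Fin (m+1), w ∈ Cset N m j := by
  have hcard := hw.1 t₀
  obtain ⟨x, y, hxy, hF⟩ := Finset.card_eq_two.1 hcard
  have hxF : w x = w t₀ := by
    have : x ∈ (Finset.univ.filter fun q => w q = w t₀) := by rw [hF]; simp
    simpa using this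
  have hyF : w y = w t₀ := by
    have : y ∈ (Finset.univ.filter fun q => w q = w t₀) := by rw [hF]; simp
    simpa using this
  have hpq : ∃ p q : Fin (m+2), p < q ∧ w p = w t₀ ∧ w q = w t₀ ∧
      (Finset.univ.filter fun r => w r = w t₀) = {p, q} := by
    rcases lt_or_gt_of_ne hxy with hlt | hlt
    · exact ⟨x, y, hlt, hxF, hyF, hF⟩
    · refine ⟨y, x, hlt, hyF, hxF, ?_⟩
      rw [hF]; ext z; simp [or_comm]
  obtain ⟨p, q, hlt, hp, hq, hFe⟩ := hpq
  have hltv : p.val < q.val := hlt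
  have hqlt := q.isLt
  have hqval : q.val = p.val + 1 := by
    by_contra hne
    have hq2 : p.val + 1 < q.val := by omega
    set l : Fin (m+2) := ⟨p.val + 1, by omega⟩ with hl
    have hlp_ne : w l ≠ w p := by
      intro heq
      have hlF : l ∈ (Finset.univ.filter fun r => w r = w t₀) := by
        simp only [Finset.mem_filter, Finset.mem_univ, true_and]
        rw [heq, hp]
      rw [hFe] at hlF
      simp only [Finset.mem_insert, Finset.mem_singleton] at hlF
      rcases hlF with h | h <;> rw [Fin.ext_iff] at h <;> simp [hl] at h <;> omega
    have hres := hw.2 p l q (by rw [Fin.lt_def]; simp [hl]) (by rw [Fin.lt_def]; simp [hl]; omega)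
      (hp.trans hq.symm) hlp_ne
    rw [hp, ht₀] at hres
    exact absurd hres (not_lt.2 (Fin.le_last _))
  refine ⟨⟨p.val, by omega⟩, ?_⟩
  simp only [Cset, Finset.mem_filter, Finset.mem_univ, true_and]
  refine ⟨hw, ?_, ?_⟩
  · have hep : (⟨p.val, by omega⟩ : Fin (m+2)) = p := Fin.ext rfl
    rw [hep, hp, ht₀]
  · have heq : (⟨p.val + 1, by omega⟩ : Fin (m+2)) = q := Fin.ext (by simp; omega)
    rw [heq, hq, ht₀]

lemma card_good_last (N m : ℕ) :
    (Finset.univ.filter fun w : Fin (m+2) → Fin (N+1) =>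
      GoodW w ∧ ∃ t, w t = Fin.last N).card = (m+1) * Gcnt N m := by
  have hU : (Finset.univ.filter fun w : Fin (m+2) → Fin (N+1) =>
      GoodW w ∧ ∃ t, w t = Fin.last N)
      = Finset.univ.biUnion (fun j : Fin (m+1) => Cset N m j) := by
    ext w
    simp only [Finset.mem_filter, Finset.mem_univ, true_and, Finset.mem_biUnion]
    constructor
    · rintro ⟨hw, t₀, ht₀⟩
      obtain ⟨j, hj⟩ := good_last_mem_Cset hw t₀ ht₀
      exact ⟨j, hj⟩
    · rintro ⟨j, hj⟩
      have hj' := hj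
      simp only [Cset, Finset.mem_filter, Finset.mem_univ, true_and] at hj'
      exact ⟨hj'.1, _, hj'.2.1⟩
  rw [hU, Finset.card_biUnion]
  · rw [Finset.sum_congr rfl (fun j _ => card_Cset N m j), Finset.sum_const, smul_eq_mul,
      Finset.card_univ, Fintype.card_fin]
  · intro j _ j' _ hne
    rw [Function.onFun, Finset.disjoint_left]
    intro w hwj hwj'
    have h1 := (Cset_last_iff hwj (⟨j'.val, by have := j'.isLt; omega⟩ : Fin (m+2))).1 (by
      have hj' := hwj'
      simp only [Cset, Finset.mem_filter, Finset.mem_univ, true_and] at hj'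
      exact hj'.2.1)
    have h2 := (Cset_last_iff hwj' (⟨j.val, by have := j.isLt; omega⟩ : Fin (m+2))).1 (by
      have hj2 := hwj
      simp only [Cset, Finset.mem_filter, Finset.mem_univ, true_and] at hj2
      exact hj2.2.1)
    simp only [] at h1 h2
    have hvne : j.val ≠ j'.val := fun hh => hne (Fin.ext hh)
    omega

lemma Gcnt_rec (N m : ℕ) : Gcnt (N+1) (m+2) = Gcnt N (m+2) + (m+1) * Gcnt N m := by
  rw [Gcnt]
  have hsplit := Finset.card_filter_add_card_filter_not
    (s := Finset.univ.filter fun w : Fin (m+2) → Fin (N+1) => GoodW w)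
    (p := fun w => ∃ t, w t = Fin.last N)
  rw [Finset.filter_filter, Finset.filter_filter] at hsplit
  have h1 : (Finset.univ.filter fun w : Fin (m+2) → Fin (N+1) =>
      GoodW w ∧ ∃ t, w t = Fin.last N).card = (m+1) * Gcnt N m := card_good_last N m
  have h2 : (Finset.univ.filter fun w : Fin (m+2) → Fin (N+1) =>
      GoodW w ∧ ¬∃ t, w t = Fin.last N).card = Gcnt N (m+2) := by
    rw [← card_nolast N (m+2)]
    congr 1
    apply Finset.filter_congr
    intro w _
    simp [not_exists]
  rw [← hsplit, h1, h2]
  ring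

lemma Gcnt_eval (N k : ℕ) : Gcnt N (2*k) = N.choose k * Dodd k := by
  induction N generalizing k with
  | zero =>
      cases k with
      | zero => simpa [Dodd] using Gcnt_zero 0
      | succ k =>
          have : IsEmpty (Fin (2*(k+1)) → Fin 0) := ⟨fun w => (w ⟨0, by omega⟩).elim0⟩
          rw [Gcnt, Finset.univ_eq_empty, Finset.filter_empty, Finset.card_empty,
            Nat.choose_eq_zero_of_lt (by omega), zero_mul]
  | succ N ih =>
      cases k with
      | zero => simpa [Dodd] using Gcnt_zero (N+1)
      | succ k =>
          rw [show (2*(k+1) : ℕ) = 2*k+2 from by ring, Gcnt_rec N (2*k),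
            show (2*k+2 : ℕ) = 2*(k+1) from by ring, ih (k+1), ih k,
            Nat.choose_succ_succ N k]
          show N.choose (k+1) * Dodd (k+1) + (2*k+1) * (N.choose k * Dodd k) = _
          rw [Dodd]
          ring
section ProbHelpers

variable {𝒜 : Type*} [Ring 𝒜] [Algebra ℂ 𝒜]

lemma sum_pow_expand {N : ℕ} (b : Fin N → 𝒜) :
    ∀ m : ℕ, (∑ i, b i) ^ m = ∑ idx : Fin m → Fin N, (List.ofFn fun t => b (idx t)).prod := by
  intro m
  induction m with
  | zero =>
      rw [pow_zero]
      have h1 : ∀ idx : Fin 0 → Fin N, (List.ofFn fun t => b (idx t)).prod = 1 := by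
        intro idx; simp
      rw [Finset.sum_congr rfl (fun i _ => h1 i), Finset.sum_const, Finset.card_univ]
      simp
  | succ m ih =>
      have key : ∀ (i : Fin N) (idx : Fin m → Fin N),
          (List.ofFn fun t : Fin (m+1) => b ((Fin.cons i idx : Fin (m+1) → Fin N) t)).prod
            = b i * (List.ofFn fun t => b (idx t)).prod := by
        intro i idx
        rw [List.ofFn_succ, List.prod_cons]
        simp only [Fin.cons_zero, Fin.cons_succ]
      calc (∑ i, b i) ^ (m+1) = ∑ i : Fin N, ∑ idx : Fin m → Fin N,
            b i * (List.ofFn fun t => b (idx t)).prod := by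
            rw [pow_succ', ih, Finset.sum_mul]
            exact Finset.sum_congr rfl fun i _ => Finset.mul_sum _ _ _
        _ = ∑ p : Fin N × (Fin m → Fin N),
            (List.ofFn fun t : Fin (m+1) => b ((Fin.consEquiv (fun _ => Fin N)) p t)).prod := by
            rw [Fintype.sum_prod_type]
            refine Finset.sum_congr rfl fun i _ => Finset.sum_congr rfl fun idx _ => ?_
            rw [show ((Fin.consEquiv (fun _ => Fin N)) (i, idx) : Fin (m+1) → Fin N)
              = (Fin.cons i idx : Fin (m+1) → Fin N) from rfl, key i idx]
        _ = ∑ idx : Fin (m+1) → Fin N, (List.ofFn fun t => b (idx t)).prod :=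
            Fintype.sum_equiv (Fin.consEquiv (fun _ => Fin N)) _ _ (fun p => rfl)

lemma kerGRelOn_refl {m : ℕ} {V : Type*} (E : V → V → Prop) (f : Fin m → V) (k : Fin m) :
    kerGRelOn E f Finset.univ k k := by
  refine ⟨rfl, fun l _ h1 h2 _ => ?_⟩
  rw [min_self] at h1
  rw [max_self] at h2
  exact absurd (h1.trans h2) (lt_irrefl k)

lemma kerGBlocks_exists {m N : ℕ} (E : Fin N → Fin N → Prop) (idx : Fin m → Fin N)
    {B : Finset (Fin m)} (hB : B ∈ kerGBlocks E idx Finset.univ) :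
    ∃ k₀, k₀ ∈ B ∧ B = Finset.univ.filter (fun k' => kerGRelOn E idx Finset.univ k₀ k') ∧
      ∀ t ∈ B, idx t = idx k₀ := by
  rw [kerGBlocks, Finset.mem_image] at hB
  obtain ⟨k, -, rfl⟩ := hB
  refine ⟨k, ?_, rfl, ?_⟩
  · simp only [Finset.mem_filter, Finset.mem_univ, true_and]
    exact kerGRelOn_refl E idx k
  · intro t ht
    simp only [Finset.mem_filter, Finset.mem_univ, true_and] at ht
    exact ht.1.symm

lemma blockProd_eq_pow {m N : ℕ} (a' : Fin N → 𝒜) (idx : Fin m → Fin N)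
    (B : Finset (Fin m)) (i : Fin N) (hconst : ∀ t ∈ B, idx t = i) :
    blockProd (fun t => a' (idx t)) B = a' i ^ B.card := by
  rw [blockProd]
  have hlen : ((B.sort (· ≤ ·)).map fun t => a' (idx t)).length = B.card := by
    rw [List.length_map, Finset.length_sort]
  rw [← hlen]
  apply List.prod_eq_pow_card
  intro x hx
  rw [List.mem_map] at hx
  obtain ⟨t, ht, rfl⟩ := hx
  rw [Finset.mem_sort] at ht
  rw [hconst t ht]

lemma card_small_image (N m r : ℕ) (hm : 1 ≤ m) :
    (Finset.univ.filter fun idx : Fin m → Fin N =>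
      (Finset.univ.image idx).card ≤ r).card ≤ N ^ r * r ^ m := by
  have hbound := Finset.card_le_card_of_surjOn
    (s := (Finset.univ : Finset ((Fin r → Fin N) × (Fin m → Fin r))))
    (t := Finset.univ.filter fun idx : Fin m → Fin N => (Finset.univ.image idx).card ≤ r)
    (fun p => p.1 ∘ p.2) ?_
  · calc _ ≤ _ := hbound
      _ = N ^ r * r ^ m := by
        rw [Finset.card_univ, Fintype.card_prod, Fintype.card_fun, Fintype.card_fun]
        simp
  · intro idx hidx
    simp only [Finset.coe_filter, Set.mem_setOf_eq, Finset.mem_univ, true_and] at hidx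
    set V := Finset.univ.image idx with hV
    have hr : V.card ≤ r := hidx
    refine ⟨(fun s => if h : s.val < V.card then (V.equivFin.symm ⟨s.val, h⟩ : {x // x ∈ V}).val
        else idx ⟨0, hm⟩,
      fun p => ⟨(V.equivFin ⟨idx p, Finset.mem_image_of_mem idx (Finset.mem_univ p)⟩).val,
        lt_of_lt_of_le (Fin.isLt _) hr⟩), by simp, ?_⟩
    funext p
    show (if h : ((V.equivFin ⟨idx p, Finset.mem_image_of_mem idx (Finset.mem_univ p)⟩).val) < V.card
        then (V.equivFin.symm ⟨(V.equivFin ⟨idx p,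
          Finset.mem_image_of_mem idx (Finset.mem_univ p)⟩).val, h⟩ : {x // x ∈ V}).val
        else idx ⟨0, hm⟩) = idx p
    rw [dif_pos (Fin.isLt _), Fin.eta, Equiv.symm_apply_apply]

end ProbHelpers
section Classify

variable {m N : ℕ} {E : Fin N → Fin N → Prop} {idx : Fin m → Fin N}

lemma good_fiber_pair (hgood : GoodW idx) (k : Fin m) :
    ∃ k', k' ≠ k ∧ idx k' = idx k ∧ ∀ t, idx t = idx k → t = k ∨ t = k' := by
  obtain ⟨x, y, hxy, hF⟩ := Finset.card_eq_two.1 (hgood.1 k)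
  have hmemk : k ∈ Finset.univ.filter (fun q => idx q = idx k) := by simp
  have hx : x ∈ Finset.univ.filter (fun q => idx q = idx k) := by rw [hF]; simp
  have hy : y ∈ Finset.univ.filter (fun q => idx q = idx k) := by rw [hF]; simp
  simp only [Finset.mem_filter, Finset.mem_univ, true_and] at hx hy
  rw [hF] at hmemk
  simp only [Finset.mem_insert, Finset.mem_singleton] at hmemk
  have hcov : ∀ t, idx t = idx k → t = x ∨ t = y := by
    intro t ht
    have : t ∈ Finset.univ.filter (fun q => idx q = idx k) := by simp [ht]
    rw [hF] at this
    simpa using this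
  rcases hmemk with rfl | rfl
  · exact ⟨y, fun h => hxy h.symm, hy, hcov⟩
  · refine ⟨x, hxy, hx, fun t ht => (hcov t ht).symm⟩

lemma rel_of_good (hE : ∀ v w : Fin N, E v w ↔ w < v) (hgood : GoodW idx)
    {p q : Fin m} (hpq : p ≠ q) (heq : idx q = idx p) : kerGRelOn E idx Finset.univ p q := by
  refine ⟨heq.symm, fun l _ h1 h2 hne => ?_⟩
  have hminp : idx (min p q) = idx p := by
    rcases min_choice p q with h | h
    · rw [h]
    · rw [h]; exact heq
  have hmaxp : idx (max p q) = idx p := by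
    rcases max_choice p q with h | h
    · rw [h]
    · rw [h]; exact heq
  have := hgood.2 (min p q) l (max p q) h1 h2 (by rw [hminp, hmaxp])
    (by rw [hminp]; exact hne)
  rw [hE]
  rw [hminp] at this
  exact this

lemma good_blocks_card_two (hE : ∀ v w : Fin N, E v w ↔ w < v) (hgood : GoodW idx) :
    ∀ B ∈ kerGBlocks E idx Finset.univ, B.card = 2 := by
  intro B hB
  obtain ⟨k, hkB, hBdef, hconst⟩ := kerGBlocks_exists E idx hB
  obtain ⟨k', hne, hval, hcov⟩ := good_fiber_pair hgood k
  have hk'B : k' ∈ B := by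
    rw [hBdef]
    simp only [Finset.mem_filter, Finset.mem_univ, true_and]
    exact rel_of_good hE hgood (fun h => hne h.symm) hval
  have heq : B = {k, k'} := by
    apply Finset.Subset.antisymm
    · intro t ht
      have := hcov t (hconst t ht)
      simpa using this
    · intro t ht
      simp only [Finset.mem_insert, Finset.mem_singleton] at ht
      rcases ht with rfl | rfl
      · exact hkB
      · exact hk'B
  rw [heq, Finset.card_pair (fun h => hne h.symm)]

lemma block_self_mem (E : Fin N → Fin N → Prop) (idx : Fin m → Fin N) (p : Fin m) :
    p ∈ Finset.univ.filter (fun k' => kerGRelOn E idx Finset.univ p k') := by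
  simp only [Finset.mem_filter, Finset.mem_univ, true_and]
  exact kerGRelOn_refl E idx p

lemma classify (hE : ∀ v w : Fin N, E v w ↔ w < v)
    (h1 : ¬∃ B ∈ kerGBlocks E idx Finset.univ, B.card = 1) (h2 : ¬GoodW idx) :
    2 * (Finset.univ.image idx).card + 1 ≤ m := by
  push_neg at h1
  have hblk2 : ∀ p : Fin m,
      2 ≤ (Finset.univ.filter (fun k' => kerGRelOn E idx Finset.univ p k')).card := by
    intro p
    have hmem : (Finset.univ.filter (fun k' => kerGRelOn E idx Finset.univ p k'))
        ∈ kerGBlocks E idx Finset.univ := by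
      rw [kerGBlocks]
      exact Finset.mem_image_of_mem _ (Finset.mem_univ p)
    have hpos : 1 ≤ (Finset.univ.filter (fun k' => kerGRelOn E idx Finset.univ p k')).card :=
      Finset.card_pos.2 ⟨p, block_self_mem E idx p⟩
    have hne1 := h1 _ hmem
    omega
  have hfib2 : ∀ p : Fin m, 2 ≤ (Finset.univ.filter fun q => idx q = idx p).card := by
    intro p
    refine le_trans (hblk2 p) (Finset.card_le_card ?_)
    intro t ht
    simp only [Finset.mem_filter, Finset.mem_univ, true_and] at ht ⊢
    exact ht.1.symm
  by_cases hall : ∀ p : Fin m, (Finset.univ.filter fun q => idx q = idx p).card = 2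
  · exfalso
    apply h2
    refine ⟨hall, ?_⟩
    intro p l q hpl hlq hpq hlp
    have hqfib : q ∈ Finset.univ.filter (fun r => idx r = idx p) := by simp [hpq.symm]
    have hpfib : p ∈ Finset.univ.filter (fun r => idx r = idx p) := by simp
    have hpairfib : ({p, q} : Finset (Fin m)) = Finset.univ.filter (fun r => idx r = idx p) := by
      apply Finset.eq_of_subset_of_card_le
      · intro t ht
        simp only [Finset.mem_insert, Finset.mem_singleton] at ht
        rcases ht with rfl | rfl
        · exact hpfib
        · exact hqfib
      · rw [hall p, Finset.card_pair (ne_of_lt (hpl.trans hlq))]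
    have hBsub : (Finset.univ.filter (fun k' => kerGRelOn E idx Finset.univ p k'))
        ⊆ Finset.univ.filter (fun r => idx r = idx p) := by
      intro t ht
      simp only [Finset.mem_filter, Finset.mem_univ, true_and] at ht ⊢
      exact ht.1.symm
    have hBeq : (Finset.univ.filter (fun k' => kerGRelOn E idx Finset.univ p k'))
        = Finset.univ.filter (fun r => idx r = idx p) :=
      Finset.eq_of_subset_of_card_le hBsub (by rw [hall p]; exact hblk2 p)
    have hqB : q ∈ Finset.univ.filter (fun k' => kerGRelOn E idx Finset.univ p k') := by
      rw [hBeq]; exact hqfib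
    simp only [Finset.mem_filter, Finset.mem_univ, true_and] at hqB
    have hEl := hqB.2 l (Finset.mem_univ l)
      (by rw [min_eq_left (le_of_lt (hpl.trans hlq))]; exact hpl)
      (by rw [max_eq_right (le_of_lt (hpl.trans hlq))]; exact hlq) hlp
    rw [hE] at hEl
    exact hEl
  · push_neg at hall
    obtain ⟨p₀, hp₀⟩ := hall
    have hp₀3 : 3 ≤ (Finset.univ.filter fun q => idx q = idx p₀).card := by
      have := hfib2 p₀; omega
    have hsum : (Finset.univ : Finset (Fin m)).card
        = ∑ i ∈ Finset.univ.image idx, (Finset.univ.filter fun q => idx q = i).card :=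
      Finset.card_eq_sum_card_fiberwise
        (fun x _ => Finset.mem_image_of_mem idx (Finset.mem_univ x))
    rw [Finset.card_univ, Fintype.card_fin] at hsum
    have hmem : idx p₀ ∈ Finset.univ.image idx := Finset.mem_image_of_mem idx (Finset.mem_univ p₀)
    have hsplit : (Finset.univ.filter fun q => idx q = idx p₀).card
        + ∑ i ∈ (Finset.univ.image idx).erase (idx p₀),
            (Finset.univ.filter fun q => idx q = i).card
        = ∑ i ∈ Finset.univ.image idx, (Finset.univ.filter fun q => idx q = i).card :=
      Finset.add_sum_erase _ (fun i => (Finset.univ.filter fun q => idx q = i).card) hmem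
    have herase : ∀ i ∈ (Finset.univ.image idx).erase (idx p₀),
        2 ≤ (Finset.univ.filter fun q => idx q = i).card := by
      intro i hi
      have hi' := Finset.mem_of_mem_erase hi
      obtain ⟨p, -, rfl⟩ := Finset.mem_image.1 hi'
      exact hfib2 p
    have hlow : ((Finset.univ.image idx).card - 1) * 2
        ≤ ∑ i ∈ (Finset.univ.image idx).erase (idx p₀),
            (Finset.univ.filter fun q => idx q = i).card := by
      have h := Finset.card_nsmul_le_sum ((Finset.univ.image idx).erase (idx p₀))
        (fun i => (Finset.univ.filter fun q => idx q = i).card) 2 herase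
      rwa [Finset.card_erase_of_mem hmem, smul_eq_mul] at h
    have hrpos : 1 ≤ (Finset.univ.image idx).card := Finset.card_pos.2 ⟨idx p₀, hmem⟩
    omega

end Classify
section MainDecomp

variable {𝒜 : Type*} [Ring 𝒜] [Algebra ℂ 𝒜]

lemma main_decomp (φ : 𝒜 →ₗ[ℂ] ℂ)
    (a : (N : ℕ) → Fin N → 𝒜) (E : (N : ℕ) → Fin N → Fin N → Prop)
    (horder : ∀ N (v w : Fin N), E N v w ↔ w < v)
    (hmean : ∀ N i, φ (a N i) = 0)
    (hvar : ∀ N i, φ (a N i * a N i) = 1)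
    (hindep : ∀ N, BMTIndepVars φ (E N) (a N))
    (hmom : ∀ n : ℕ, ∃ C : ℝ, ∀ N, ∀ i : Fin N, ‖φ (a N i ^ n)‖ ≤ C)
    (m : ℕ) (hm : 1 ≤ m) :
    ∃ C : ℝ, 0 ≤ C ∧ ∀ N : ℕ,
      ‖φ ((∑ i : Fin N, a N i) ^ m) - (Gcnt N m : ℂ)‖
        ≤ C * (N : ℝ) ^ ((m-1)/2) := by
  choose Cb hCb using hmom
  set C0 : ℝ := 1 + ∑ n ∈ Finset.range (m+1), |Cb n| with hC0
  have hC0ge1 : 1 ≤ C0 := by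
    have : 0 ≤ ∑ n ∈ Finset.range (m+1), |Cb n| :=
      Finset.sum_nonneg fun n _ => abs_nonneg _
    simp [hC0]
    linarith
  have hC0mom : ∀ n ≤ m, ∀ N, ∀ i : Fin N, ‖φ (a N i ^ n)‖ ≤ C0 := by
    intro n hn N i
    refine le_trans (hCb n N i) (le_trans (le_abs_self _) ?_)
    have hmem : n ∈ Finset.range (m+1) := Finset.mem_range.2 (by omega)
    have := Finset.single_le_sum (f := fun n => |Cb n|) (fun n _ => abs_nonneg _) hmem
    simp [hC0]
    linarith
  refine ⟨C0 ^ m * ((m-1)/2 : ℕ) ^ m, by positivity, fun N => ?_⟩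
  -- abbreviations
  set W : (Fin m → Fin N) → ℂ := fun idx =>
    ∏ B ∈ kerGBlocks (E N) idx Finset.univ, φ (blockProd (fun t => a N (idx t)) B) with hW
  have hexp : φ ((∑ i : Fin N, a N i) ^ m) = ∑ idx : Fin m → Fin N, W idx := by
    rw [sum_pow_expand (a N) m, map_sum]
    exact Finset.sum_congr rfl fun idx _ => hindep N m idx
  -- block values
  have hval : ∀ (idx : Fin m → Fin N), ∀ B ∈ kerGBlocks (E N) idx Finset.univ,
      ∃ i : Fin N, φ (blockProd (fun t => a N (idx t)) B) = φ (a N i ^ B.card) := by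
    intro idx B hB
    obtain ⟨k₀, -, -, hconst⟩ := kerGBlocks_exists (E N) idx hB
    exact ⟨idx k₀, by rw [blockProd_eq_pow (a N) idx B (idx k₀) hconst]⟩
  -- value on words with a singleton block
  have hW0 : ∀ idx : Fin m → Fin N, (∃ B ∈ kerGBlocks (E N) idx Finset.univ, B.card = 1) →
      W idx = 0 := by
    rintro idx ⟨B, hB, hB1⟩
    refine Finset.prod_eq_zero hB ?_
    obtain ⟨i, hi⟩ := hval idx B hB
    rw [hi, hB1, pow_one, hmean]
  -- value on good words
  have hW1 : ∀ idx : Fin m → Fin N, GoodW idx → W idx = 1 := by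
    intro idx hgood
    refine Finset.prod_eq_one fun B hB => ?_
    obtain ⟨i, hi⟩ := hval idx B hB
    rw [hi, good_blocks_card_two (horder N) hgood B hB, pow_two, hvar]
  -- uniform bound
  have hWb : ∀ idx : Fin m → Fin N, ‖W idx‖ ≤ C0 ^ m := by
    intro idx
    rw [hW]
    rw [norm_prod]
    calc ∏ B ∈ kerGBlocks (E N) idx Finset.univ, ‖φ (blockProd (fun t => a N (idx t)) B)‖
        ≤ ∏ _B ∈ kerGBlocks (E N) idx Finset.univ, C0 := by
          refine Finset.prod_le_prod (fun _ _ => norm_nonneg _) (fun B hB => ?_)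
          obtain ⟨i, hi⟩ := hval idx B hB
          rw [hi]
          exact hC0mom B.card (le_trans (Finset.card_le_univ B) (by simp)) N i
      _ = C0 ^ (kerGBlocks (E N) idx Finset.univ).card := Finset.prod_const C0
      _ ≤ C0 ^ m := by
          apply pow_le_pow_right₀ hC0ge1
          refine le_trans Finset.card_image_le ?_
          simp
  -- split the sum
  have hsplit1 := Finset.sum_filter_add_sum_filter_not Finset.univ
    (fun idx : Fin m → Fin N => ∃ B ∈ kerGBlocks (E N) idx Finset.univ, B.card = 1) W
  have hzero : ∑ idx ∈ Finset.univ.filter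
      (fun idx : Fin m → Fin N => ∃ B ∈ kerGBlocks (E N) idx Finset.univ, B.card = 1), W idx
      = 0 := by
    refine Finset.sum_eq_zero fun idx hidx => ?_
    simp only [Finset.mem_filter, Finset.mem_univ, true_and] at hidx
    exact hW0 idx hidx
  set T := Finset.univ.filter
    (fun idx : Fin m → Fin N => ¬∃ B ∈ kerGBlocks (E N) idx Finset.univ, B.card = 1) with hT
  have hsplit2 := Finset.sum_filter_add_sum_filter_not T (fun idx => GoodW idx) W
  have hgoodset : T.filter (fun idx => GoodW idx) = Finset.univ.filter GoodW := by
    rw [hT, Finset.filter_filter]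
    apply Finset.filter_congr
    intro idx _
    constructor
    · rintro ⟨-, h⟩; exact h
    · intro h
      refine ⟨?_, h⟩
      rintro ⟨B, hB, hB1⟩
      rw [good_blocks_card_two (horder N) h B hB] at hB1
      omega
  have hgoodsum : ∑ idx ∈ T.filter (fun idx => GoodW idx), W idx = (Gcnt N m : ℂ) := by
    rw [hgoodset]
    rw [Finset.sum_congr rfl (fun idx hidx => hW1 idx (by
      simp only [Finset.mem_filter, Finset.mem_univ, true_and] at hidx; exact hidx))]
    rw [Finset.sum_const, Gcnt, nsmul_eq_mul, mul_one]
  -- the remainder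
  have hrest : ∑ idx : Fin m → Fin N, W idx
      = (Gcnt N m : ℂ) + ∑ idx ∈ T.filter (fun idx => ¬GoodW idx), W idx := by
    rw [← hsplit1, hzero, zero_add, ← hsplit2, hgoodsum]
  have hsubset : T.filter (fun idx => ¬GoodW idx)
      ⊆ Finset.univ.filter (fun idx : Fin m → Fin N =>
          (Finset.univ.image idx).card ≤ (m-1)/2) := by
    intro idx hidx
    simp only [hT, Finset.mem_filter, Finset.mem_univ, true_and] at hidx ⊢
    have := classify (horder N) hidx.1 hidx.2
    omega
  have hcount : (T.filter (fun idx => ¬GoodW idx)).card ≤ N ^ ((m-1)/2) * ((m-1)/2) ^ m :=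
    le_trans (Finset.card_le_card hsubset) (card_small_image N m ((m-1)/2) hm)
  have hrem : ‖∑ idx ∈ T.filter (fun idx => ¬GoodW idx), W idx‖
      ≤ (C0 ^ m * ((m-1)/2 : ℕ) ^ m) * (N : ℝ) ^ ((m-1)/2) := by
    refine le_trans (norm_sum_le _ _) ?_
    calc ∑ idx ∈ T.filter (fun idx => ¬GoodW idx), ‖W idx‖
        ≤ ∑ _idx ∈ T.filter (fun idx => ¬GoodW idx), C0 ^ m :=
          Finset.sum_le_sum fun idx _ => hWb idx
      _ = (T.filter (fun idx => ¬GoodW idx)).card * C0 ^ m := by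
          rw [Finset.sum_const, nsmul_eq_mul]
      _ ≤ (N ^ ((m-1)/2) * ((m-1)/2) ^ m : ℕ) * C0 ^ m := by
          apply mul_le_mul_of_nonneg_right _ (by positivity)
          exact_mod_cast hcount
      _ = (C0 ^ m * ((m-1)/2 : ℕ) ^ m) * (N : ℝ) ^ ((m-1)/2) := by
          push_cast
          ring
  rw [hexp, hrest]
  simpa using hrem

end MainDecomp
section Limits

lemma choose_div_pow_tendsto (k : ℕ) :
    Tendsto (fun N : ℕ => (N.choose k : ℝ) / (N : ℝ) ^ k) atTop
      (nhds (1 / (k.factorial : ℝ))) := by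
  have hdesc : Tendsto (fun N : ℕ => (N.descFactorial k : ℝ) / (N : ℝ) ^ k) atTop (nhds 1) := by
    have h2 : Tendsto (fun N : ℕ => ∏ i ∈ Finset.range k, (1 - (i : ℝ) / (N : ℝ))) atTop
        (nhds 1) := by
      have := tendsto_finset_prod (f := fun (i : ℕ) (N : ℕ) => 1 - (i : ℝ) / (N : ℝ))
        (x := atTop) (a := fun _ => (1 : ℝ)) (Finset.range k) (fun i _ => by
          have h0 := tendsto_const_div_atTop_nhds_zero_nat (i : ℝ)
          have := (tendsto_const_nhds (x := (1:ℝ)) (f := atTop)).sub h0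
          simpa using this)
      simpa using this
    apply Tendsto.congr' _ h2
    filter_upwards [eventually_ge_atTop (k+1)] with N hN
    have hNpos : 0 < (N : ℝ) := by
      have h0 : 0 < N := by omega
      exact_mod_cast h0
    rw [Nat.descFactorial_eq_prod_range, Nat.cast_prod]
    have hpow : (N : ℝ) ^ k = ∏ _i ∈ Finset.range k, (N : ℝ) := by
      rw [Finset.prod_const, Finset.card_range]
    rw [hpow, ← Finset.prod_div_distrib]
    refine Finset.prod_congr rfl fun i hi => ?_
    rw [Finset.mem_range] at hi
    have hiN : i ≤ N := by omega
    rw [Nat.cast_sub hiN, sub_div, div_self (ne_of_gt hNpos)]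
  have hfact : ∀ N : ℕ, (N.choose k : ℝ) = (N.descFactorial k : ℝ) / (k.factorial : ℝ) := by
    intro N
    rw [Nat.choose_eq_descFactorial_div_factorial,
      Nat.cast_div (Nat.factorial_dvd_descFactorial N k)
        (by exact_mod_cast Nat.factorial_ne_zero k)]
  have := hdesc.mul_const (1 / (k.factorial : ℝ))
  rw [one_mul] at this
  apply Tendsto.congr _ this
  intro N
  rw [hfact N]
  ring

lemma sqrt_nat_tendsto : Tendsto (fun N : ℕ => Real.sqrt N) atTop atTop := by
  apply tendsto_atTop_atTop.2
  intro b
  refine ⟨(Nat.ceil (max b 0)) ^ 2, fun n hn => ?_⟩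
  calc b ≤ max b 0 := le_max_left _ _
    _ ≤ (Nat.ceil (max b 0) : ℝ) := Nat.le_ceil _
    _ = Real.sqrt (((Nat.ceil (max b 0) : ℝ)) ^ 2) := (Real.sqrt_sq (by positivity)).symm
    _ ≤ Real.sqrt n := by
        apply Real.sqrt_le_sqrt
        have : ((Nat.ceil (max b 0)) ^ 2 : ℕ) ≤ n := hn
        exact_mod_cast this

end Limits
/-- monotone central limit theorem. For BMT independence with respect to the
digraphs with edge set `{(j,i) : i < j}`, the normalized sums converge in moments to the
arcsine distribution on `(-√2, √2)`: even moments `(2k choose k)/2^k`, odd moments `0`. -/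
theorem stmt16 {𝒜 : Type*} [Ring 𝒜] [Algebra ℂ 𝒜] (φ : 𝒜 →ₗ[ℂ] ℂ) (hφ : φ 1 = 1)
    (a : (N : ℕ) → Fin N → 𝒜) (E : (N : ℕ) → Fin N → Fin N → Prop)
    (horder : ∀ N (v w : Fin N), E N v w ↔ w < v)
    (hmean : ∀ N i, φ (a N i) = 0)
    (hvar : ∀ N i, φ (a N i * a N i) = 1)
    (hindep : ∀ N, BMTIndepVars φ (E N) (a N))
    (hmom : ∀ n : ℕ, ∃ C : ℝ, ∀ N, ∀ i : Fin N, ‖φ (a N i ^ n)‖ ≤ C) :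
    (∀ k : ℕ, 1 ≤ k →
      Tendsto
        (fun N : ℕ => φ ((∑ i : Fin N, a N i) ^ (2 * k)) / ((Real.sqrt N : ℝ) : ℂ) ^ (2 * k))
        atTop (nhds (((2 * k).choose k : ℂ) / 2 ^ k))) ∧
    (∀ m : ℕ, Odd m →
      Tendsto (fun N : ℕ => φ ((∑ i : Fin N, a N i) ^ m) / ((Real.sqrt N : ℝ) : ℂ) ^ m)
        atTop (nhds 0)) := by
  constructor
  · -- even moments
    intro k hk
    obtain ⟨C, hCge, hC⟩ := main_decomp φ a E horder hmean hvar hindep hmom (2*k) (by omega)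
    have hdenom : ∀ N : ℕ, ((Real.sqrt N : ℝ) : ℂ) ^ (2*k) = (N : ℂ) ^ k := by
      intro N
      have h1 : (Real.sqrt N) ^ (2*k) = (N : ℝ) ^ k := by
        rw [pow_mul, Real.sq_sqrt (Nat.cast_nonneg N)]
      calc ((Real.sqrt N : ℝ) : ℂ) ^ (2*k) = (((Real.sqrt N) ^ (2*k) : ℝ) : ℂ) := by push_cast; ring
        _ = (((N:ℝ) ^ k : ℝ) : ℂ) := by rw [h1]
        _ = (N : ℂ) ^ k := by push_cast; ring
    have hg1 : Tendsto (fun N : ℕ => (Gcnt N (2*k) : ℂ) / (N : ℂ) ^ k) atTop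
        (nhds (((2 * k).choose k : ℂ) / 2 ^ k)) := by
      have hcc := (Complex.continuous_ofReal.tendsto ((1 : ℝ) / (k.factorial : ℝ))).comp
        (choose_div_pow_tendsto k)
      have hcc' : Tendsto (fun N : ℕ => (N.choose k : ℂ) / (N : ℂ) ^ k) atTop
          (nhds ((1 / (k.factorial : ℝ) : ℝ) : ℂ)) := by
        apply Tendsto.congr _ hcc
        intro N
        show (((N.choose k : ℝ) / (N : ℝ) ^ k : ℝ) : ℂ) = (N.choose k : ℂ) / (N : ℂ) ^ k
        push_cast
        ring
      have hmul := hcc'.const_mul ((Dodd k : ℂ))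
      have heq : (fun N : ℕ => (Gcnt N (2*k) : ℂ) / (N : ℂ) ^ k)
          = fun N : ℕ => (Dodd k : ℂ) * ((N.choose k : ℂ) / (N : ℂ) ^ k) := by
        funext N
        rw [Gcnt_eval N k]
        push_cast
        ring
      rw [heq]
      have hlim : (Dodd k : ℂ) * ((1 / (k.factorial : ℝ) : ℝ) : ℂ)
          = ((2 * k).choose k : ℂ) / 2 ^ k := by
        have hfne : ((k.factorial : ℂ)) ≠ 0 := by
          exact_mod_cast Nat.cast_ne_zero.2 (Nat.factorial_ne_zero k)
        have h2ne : ((2 : ℂ) ^ k) ≠ 0 := pow_ne_zero _ two_ne_zero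
        have hd : (Dodd k : ℂ) * (2 ^ k * (k.factorial : ℂ)) = ((2*k).factorial : ℂ) := by
          exact_mod_cast congrArg (Nat.cast : ℕ → ℂ) (Dodd_mul_eq k)
        have hc : ((2*k).choose k : ℂ) * (k.factorial : ℂ) * (k.factorial : ℂ)
            = ((2*k).factorial : ℂ) := by
          have hnat := Nat.choose_mul_factorial_mul_factorial (show k ≤ 2*k by omega)
          rw [show 2*k - k = k by omega] at hnat
          exact_mod_cast congrArg (Nat.cast : ℕ → ℂ) hnat
        have hcan : ((Dodd k : ℂ) * 2 ^ k) * (k.factorial : ℂ)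
            = (((2*k).choose k : ℂ) * (k.factorial : ℂ)) * (k.factorial : ℂ) := by
          linear_combination hd - hc
        have hred := mul_right_cancel₀ hfne hcan
        push_cast
        rw [mul_one_div, div_eq_div_iff hfne h2ne]
        linear_combination hred
      rw [hlim] at hmul
      exact hmul
    have hg2 : Tendsto (fun N : ℕ =>
        (φ ((∑ i : Fin N, a N i) ^ (2*k)) - (Gcnt N (2*k) : ℂ)) / (N : ℂ) ^ k) atTop
        (nhds 0) := by
      apply squeeze_zero_norm' (a := fun N : ℕ => C / (N : ℝ))
      · filter_upwards [eventually_ge_atTop 1] with N hN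
        have hNpos : (0:ℝ) < N := by exact_mod_cast (by omega : 0 < N)
        rw [norm_div, norm_pow, Complex.norm_natCast]
        have hbound := hC N
        rw [show (2*k-1)/2 = k-1 by omega] at hbound
        have hk1 : (N:ℝ) ^ k = (N:ℝ) ^ (k-1) * (N:ℝ) := by
          rw [← pow_succ, show k - 1 + 1 = k by omega]
        rw [div_le_div_iff₀ (by positivity) hNpos, hk1]
        calc ‖φ ((∑ i : Fin N, a N i) ^ (2*k)) - (Gcnt N (2*k) : ℂ)‖ * (N:ℝ)
            ≤ (C * (N:ℝ) ^ (k-1)) * (N:ℝ) := by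
              apply mul_le_mul_of_nonneg_right hbound (le_of_lt hNpos)
          _ = C * ((N:ℝ) ^ (k-1) * (N:ℝ)) := by ring
      · exact tendsto_const_div_atTop_nhds_zero_nat C
    have hsum := hg1.add hg2
    rw [add_zero] at hsum
    apply Tendsto.congr _ hsum
    intro N
    rw [hdenom N]
    rw [← add_div, add_sub_cancel]
  · -- odd moments
    intro m hm
    have hm1 : 1 ≤ m := hm.pos
    obtain ⟨C, hCge, hC⟩ := main_decomp φ a E horder hmean hvar hindep hmom m hm1
    obtain ⟨r, hr⟩ := hm
    apply squeeze_zero_norm' (a := fun N : ℕ => C / Real.sqrt N)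
    · filter_upwards [eventually_ge_atTop 1] with N hN
      have hNpos : (0:ℝ) < N := by exact_mod_cast (by omega : 0 < N)
      have hsq_pos : 0 < Real.sqrt N := Real.sqrt_pos.2 hNpos
      have hbound := hC N
      rw [Gcnt_odd ⟨r, hr⟩, Nat.cast_zero, sub_zero] at hbound
      rw [show (m-1)/2 = r by omega] at hbound
      have hden : ‖((Real.sqrt N : ℝ) : ℂ) ^ m‖ = (N:ℝ) ^ r * Real.sqrt N := by
        rw [norm_pow, Complex.norm_real, Real.norm_eq_abs, abs_of_nonneg (Real.sqrt_nonneg _)]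
        rw [hr, pow_succ, pow_mul, Real.sq_sqrt (Nat.cast_nonneg N)]
      rw [norm_div, hden]
      rw [div_le_div_iff₀ (by positivity) hsq_pos]
      calc ‖φ ((∑ i : Fin N, a N i) ^ m)‖ * Real.sqrt N
          ≤ (C * (N:ℝ) ^ r) * Real.sqrt N :=
            mul_le_mul_of_nonneg_right hbound (Real.sqrt_nonneg _)
        _ = C * ((N:ℝ) ^ r * Real.sqrt N) := by ring
    · exact Tendsto.div_atTop tendsto_const_nhds sqrt_nat_tendsto
end
end
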